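/- arXiv:2502.01875 — 4 statements merged into one kernel-verified Lean document; each statement's English description precedes it below -/
import Mathlib

section
/- For every complex number q with |q| < 1 (with values of q making any denominator factor 1 + q^j vanish excluded), ∑_{m≥1, n≥0} q^{2m+n} (q^3; q^3)_{m−1} (q; q)_{m+n} (−q^3; q^3)_{m+n−1} / [ (q; q)_{m−1} (−q; q)_m^2 (−q; q)_{m+n−1} (q^3; q^3)_{m+n} ] = (1/3)·(−q^3; q^3)_∞ / (−q; q)_∞^3 − (1/2)·(−q^3; q^3)_∞ (q; q)_∞ / [ (q^3; q^3)_∞ (−q; q)_∞ ] + 1/6. -/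
open Filter Topology Finset


/-- Finite q-Pochhammer symbol `(a; q)_n = ∏_{j=0}^{n-1} (1 - a q^j)`. -/
noncomputable def qPoch (q a : ℂ) (n : ℕ) : ℂ := ∏ j ∈ Finset.range n, (1 - a * q ^ j)

/-- Infinite q-Pochhammer symbol `(a; q)_∞ = ∏_{j=0}^{∞} (1 - a q^j)`. -/
noncomputable def qPochInf (q a : ℂ) : ℂ := ∏' j : ℕ, (1 - a * q ^ j)

/- The double sum is over `m ≥ 1, n ≥ 0`, encoded by `m = p.1 + 1`, `n = p.2`. -/

namespace DS1


/-- general helper: multipliable and nonzero infinite product -/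
lemma mult_of (f : ℕ → ℂ) (hne : ∀ j, f j ≠ 0) (g : ℕ → ℝ)
    (hg : Summable g) (hb : ∀ j, ‖f j - 1‖ ≤ g j) :
    Multipliable f ∧ (∏' j, f j) ≠ 0 := by
  have htend : Tendsto (fun j => ‖f j - 1‖) atTop (𝓝 0) :=
    squeeze_zero (fun j => norm_nonneg _) hb hg.tendsto_atTop_zero
  have hev : ∀ᶠ j in atTop, ‖f j - 1‖ < 1/2 := htend.eventually_lt_const (by norm_num)
  obtain ⟨N, hN⟩ := hev.exists_forall_of_atTop
  have hlog : Summable (fun j => Complex.log (f j)) := by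
    rw [← summable_nat_add_iff N]
    have hgs : Summable (fun j => (3/2 : ℝ) * g (j + N)) :=
      ((summable_nat_add_iff N).2 hg).mul_left _
    refine Summable.of_norm_bounded hgs (fun j => ?_)
    have h1 : ‖f (j + N) - 1‖ ≤ 1/2 := (hN (j + N) (Nat.le_add_left _ _)).le
    have h2 := Complex.norm_log_one_add_half_le_self (z := f (j + N) - 1) h1
    simp only [add_sub_cancel] at h2
    exact h2.trans (by have := hb (j + N); nlinarith [hb (j+N)])
  have hm : Multipliable f :=
    Complex.multipliable_of_summable_log hlog
  have hval := Complex.cexp_tsum_eq_tprod hne hlog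
  refine ⟨hm, ?_⟩
  rw [← hval]
  exact Complex.exp_ne_zero _

/-- bounds from a convergent sequence of nonzero terms with nonzero limit -/
lemma bound_of_tendsto (u : ℕ → ℂ) (L : ℂ) (hu : Tendsto u atTop (𝓝 L))
    (hne : ∀ k, u k ≠ 0) (hL : L ≠ 0) :
    ∃ B β : ℝ, 0 < β ∧ (∀ k, ‖u k‖ ≤ B) ∧ (∀ k, β ≤ ‖u k‖) := by
  obtain ⟨B, hB⟩ := (hu.norm).bddAbove_range
  have hinv : Tendsto (fun k => ‖u k‖⁻¹) atTop (𝓝 ‖L‖⁻¹) :=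
    (hu.norm).inv₀ (by simpa using hL)
  obtain ⟨C, hC⟩ := hinv.bddAbove_range
  have hC0 : 0 < C := lt_of_lt_of_le (by simpa using (hne 0)) (hC ⟨0, rfl⟩)
  refine ⟨B, C⁻¹, inv_pos.2 hC0, fun k => hB ⟨k, rfl⟩, fun k => ?_⟩
  have h1 : ‖u k‖⁻¹ ≤ C := hC ⟨k, rfl⟩
  have h2 : 0 < ‖u k‖ := norm_pos_iff.2 (hne k)
  rw [inv_le_comm₀ hC0 h2]
  exact h1


variable (q : ℂ)

def fq (j : ℕ) : ℂ := 1 - q ^ (j + 1)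
def fe (j : ℕ) : ℂ := 1 + q ^ (j + 1)
def fp (j : ℕ) : ℂ := 1 + q ^ (j + 1) + (q ^ (j + 1)) ^ 2
def fm (j : ℕ) : ℂ := 1 - q ^ (j + 1) + (q ^ (j + 1)) ^ 2

noncomputable def Pq (k : ℕ) : ℂ := ∏ j ∈ Finset.range k, fq q j
noncomputable def Pe (k : ℕ) : ℂ := ∏ j ∈ Finset.range k, fe q j
noncomputable def Pp (k : ℕ) : ℂ := ∏ j ∈ Finset.range k, fp q j
noncomputable def Pm (k : ℕ) : ℂ := ∏ j ∈ Finset.range k, fm q j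

lemma cube1 (j : ℕ) : 1 - q ^ 3 * (q ^ 3) ^ j = fq q j * fp q j := by
  have h : q ^ 3 * (q ^ 3) ^ j = (q ^ (j + 1)) ^ 3 := by
    rw [← pow_mul, ← pow_add, ← pow_mul]; congr 1; ring
  rw [h, fq, fp]; ring

lemma cube2 (j : ℕ) : 1 - (-q ^ 3) * (q ^ 3) ^ j = fe q j * fm q j := by
  have h : q ^ 3 * (q ^ 3) ^ j = (q ^ (j + 1)) ^ 3 := by
    rw [← pow_mul, ← pow_add, ← pow_mul]; congr 1; ring
  have h2 : (1 : ℂ) - (-q ^ 3) * (q ^ 3) ^ j = 1 + q ^ 3 * (q ^ 3) ^ j := by ring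
  rw [h2, h, fe, fm]; ring

lemma qPoch_qq (k : ℕ) : qPoch q q k = Pq q k :=
  Finset.prod_congr rfl fun j _ => by rw [fq, pow_succ]; ring

lemma qPoch_qe (k : ℕ) : qPoch q (-q) k = Pe q k :=
  Finset.prod_congr rfl fun j _ => by rw [fe, pow_succ]; ring

lemma qPoch_q3 (k : ℕ) : qPoch (q ^ 3) (q ^ 3) k = Pq q k * Pp q k := by
  rw [qPoch, Pq, Pp, ← Finset.prod_mul_distrib]
  exact Finset.prod_congr rfl fun j _ => cube1 q j

lemma qPoch_q3m (k : ℕ) : qPoch (q ^ 3) (-q ^ 3) k = Pe q k * Pm q k := by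
  rw [qPoch, Pe, Pm, ← Finset.prod_mul_distrib]
  exact Finset.prod_congr rfl fun j _ => cube2 q j

variable {q}

section bounds
variable (hq : ‖q‖ < 1)
include hq

lemma hxlt (j : ℕ) : ‖q ^ (j + 1)‖ < 1 := by
  rw [norm_pow]; exact pow_lt_one₀ (norm_nonneg q) hq (Nat.succ_ne_zero j)

omit hq in
lemma one_sub_ne {z : ℂ} (h : ‖z‖ < 1) : (1 : ℂ) - z ≠ 0 := by
  intro h0
  rw [sub_eq_zero] at h0
  rw [← h0] at h; simp at h

omit hq in
lemma one_add_ne {z : ℂ} (h : ‖z‖ < 1) : (1 : ℂ) + z ≠ 0 := by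
  intro h0
  have : z = -1 := by linear_combination h0
  rw [this] at h; simp at h

lemma fq_ne (j : ℕ) : fq q j ≠ 0 := one_sub_ne (hxlt hq j)

lemma fe_ne (j : ℕ) : fe q j ≠ 0 := one_add_ne (hxlt hq j)

lemma cube_lt (j : ℕ) : ‖(q ^ (j + 1)) ^ 3‖ < 1 := by
  rw [norm_pow]
  exact pow_lt_one₀ (norm_nonneg _) (hxlt hq j) (by norm_num)

lemma fp_ne (j : ℕ) : fp q j ≠ 0 := by
  have h : fq q j * fp q j = 1 - (q ^ (j + 1)) ^ 3 := by rw [fq, fp]; ring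
  have h2 : fq q j * fp q j ≠ 0 := h ▸ one_sub_ne (cube_lt hq j)
  exact fun h0 => h2 (by rw [h0, mul_zero])

lemma fm_ne (j : ℕ) : fm q j ≠ 0 := by
  have h : fe q j * fm q j = 1 + (q ^ (j + 1)) ^ 3 := by rw [fe, fm]; ring
  have h2 : fe q j * fm q j ≠ 0 := h ▸ one_add_ne (cube_lt hq j)
  exact fun h0 => h2 (by rw [h0, mul_zero])

lemma Pq_ne (k : ℕ) : Pq q k ≠ 0 :=
  Finset.prod_ne_zero_iff.2 fun j _ => fq_ne hq j
lemma Pe_ne (k : ℕ) : Pe q k ≠ 0 :=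
  Finset.prod_ne_zero_iff.2 fun j _ => fe_ne hq j
lemma Pp_ne (k : ℕ) : Pp q k ≠ 0 :=
  Finset.prod_ne_zero_iff.2 fun j _ => fp_ne hq j
lemma Pm_ne (k : ℕ) : Pm q k ≠ 0 :=
  Finset.prod_ne_zero_iff.2 fun j _ => fm_ne hq j

lemma geo_sum : Summable (fun j : ℕ => 2 * ‖q‖ * ‖q‖ ^ j) :=
  (summable_geometric_of_lt_one (norm_nonneg q) hq).mul_left _

omit hq in
lemma pow_bnd (j : ℕ) : ‖q ^ (j + 1)‖ ≤ ‖q‖ * ‖q‖ ^ j := by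
  rw [norm_pow, pow_succ, mul_comm]

lemma sq_bnd (j : ℕ) : ‖(q ^ (j + 1)) ^ 2‖ ≤ ‖q‖ * ‖q‖ ^ j := by
  rw [norm_pow]
  calc ‖q ^ (j+1)‖ ^ 2 ≤ ‖q ^ (j+1)‖ * 1 := by
        rw [sq]
        exact mul_le_mul_of_nonneg_left (hxlt hq j).le (norm_nonneg _)
    _ ≤ ‖q‖ * ‖q‖ ^ j := by rw [mul_one]; exact pow_bnd j

lemma fq_bnd (j : ℕ) : ‖fq q j - 1‖ ≤ 2 * ‖q‖ * ‖q‖ ^ j := by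
  have h : fq q j - 1 = -q ^ (j+1) := by rw [fq]; ring
  rw [h, norm_neg]
  nlinarith [pow_bnd (q := q) j, norm_nonneg q, pow_nonneg (norm_nonneg q) j]

lemma fe_bnd (j : ℕ) : ‖fe q j - 1‖ ≤ 2 * ‖q‖ * ‖q‖ ^ j := by
  have h : fe q j - 1 = q ^ (j+1) := by rw [fe]; ring
  rw [h]
  nlinarith [pow_bnd (q := q) j, norm_nonneg q, pow_nonneg (norm_nonneg q) j]

lemma fp_bnd (j : ℕ) : ‖fp q j - 1‖ ≤ 2 * ‖q‖ * ‖q‖ ^ j := by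
  have h : fp q j - 1 = q ^ (j+1) + (q ^ (j+1)) ^ 2 := by rw [fp]; ring
  rw [h]
  calc ‖q ^ (j+1) + (q^(j+1))^2‖ ≤ ‖q ^ (j+1)‖ + ‖(q^(j+1))^2‖ := norm_add_le _ _
    _ ≤ 2 * ‖q‖ * ‖q‖ ^ j := by nlinarith [pow_bnd (q := q) j, sq_bnd hq j]

lemma fm_bnd (j : ℕ) : ‖fm q j - 1‖ ≤ 2 * ‖q‖ * ‖q‖ ^ j := by
  have h : fm q j - 1 = -q ^ (j+1) + (q ^ (j+1)) ^ 2 := by rw [fm]; ring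
  rw [h]
  calc ‖-q ^ (j+1) + (q^(j+1))^2‖ ≤ ‖-q ^ (j+1)‖ + ‖(q^(j+1))^2‖ := norm_add_le _ _
    _ ≤ 2 * ‖q‖ * ‖q‖ ^ j := by
        rw [norm_neg]; nlinarith [pow_bnd (q := q) j, sq_bnd hq j]

end bounds


section products
variable (hq : ‖q‖ < 1)
include hq

lemma mult_fq : Multipliable (fq q) ∧ (∏' j, fq q j) ≠ 0 :=
  mult_of _ (fq_ne hq) _ (geo_sum hq) (fq_bnd hq)
lemma mult_fe : Multipliable (fe q) ∧ (∏' j, fe q j) ≠ 0 :=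
  mult_of _ (fe_ne hq) _ (geo_sum hq) (fe_bnd hq)
lemma mult_fp : Multipliable (fp q) ∧ (∏' j, fp q j) ≠ 0 :=
  mult_of _ (fp_ne hq) _ (geo_sum hq) (fp_bnd hq)
lemma mult_fm : Multipliable (fm q) ∧ (∏' j, fm q j) ≠ 0 :=
  mult_of _ (fm_ne hq) _ (geo_sum hq) (fm_bnd hq)

lemma tendsto_Pq : Tendsto (Pq q) atTop (𝓝 (∏' j, fq q j)) :=
  (mult_fq hq).1.hasProd.tendsto_prod_nat
lemma tendsto_Pe : Tendsto (Pe q) atTop (𝓝 (∏' j, fe q j)) :=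
  (mult_fe hq).1.hasProd.tendsto_prod_nat
lemma tendsto_Pp : Tendsto (Pp q) atTop (𝓝 (∏' j, fp q j)) :=
  (mult_fp hq).1.hasProd.tendsto_prod_nat
lemma tendsto_Pm : Tendsto (Pm q) atTop (𝓝 (∏' j, fm q j)) :=
  (mult_fm hq).1.hasProd.tendsto_prod_nat

end products


/-- generic telescoping HasSum -/
lemma telescope (g : ℕ → ℂ) (L : ℂ) (hg : Tendsto g atTop (𝓝 L))
    (hs : Summable (fun n => g n - g (n + 1))) :
    HasSum (fun n => g n - g (n + 1)) (g 0 - L) := by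
  have h2 := hs.hasSum.tendsto_sum_nat
  have h2' : Tendsto (fun N => g 0 - g N) atTop (𝓝 (∑' n, (g n - g (n + 1)))) :=
    h2.congr (fun N => Finset.sum_range_sub' g N)
  have h3 : Tendsto (fun N => g 0 - g N) atTop (𝓝 (g 0 - L)) :=
    tendsto_const_nhds.sub hg
  have h4 : (∑' n, (g n - g (n + 1))) = g 0 - L := tendsto_nhds_unique h2' h3
  exact h4 ▸ hs.hasSum

section main
variable (q : ℂ)

noncomputable def cf (k : ℕ) : ℂ := (1 / 2) * Pm q k / Pp q k
noncomputable def ef (k : ℕ) : ℂ := (1 / 3) * Pm q k / (Pe q k) ^ 2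
noncomputable def df (k : ℕ) : ℂ := Pp q k / (Pe q k) ^ 2
noncomputable def Af (i : ℕ) : ℂ := q ^ (i + 1) * Pp q i / (Pe q (i + 1)) ^ 2

variable {q} (hq : ‖q‖ < 1)
include hq

lemma cf_diff (k : ℕ) :
    cf q k - cf q (k + 1) = q ^ (k + 1) * Pm q k / Pp q (k + 1) := by
  have h1 : Pp q (k + 1) = Pp q k * fp q k := Finset.prod_range_succ _ _
  have h2 : Pm q (k + 1) = Pm q k * fm q k := Finset.prod_range_succ _ _
  rw [cf, cf, h1, h2]
  have e1 := Pp_ne hq k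
  have e2 := fp_ne hq k
  field_simp
  rw [fp, fm]
  ring

lemma ef_diff (k : ℕ) :
    ef q k - ef q (k + 1) = q ^ (k + 1) * Pm q k / (Pe q (k + 1)) ^ 2 := by
  have h1 : Pe q (k + 1) = Pe q k * fe q k := Finset.prod_range_succ _ _
  have h2 : Pm q (k + 1) = Pm q k * fm q k := Finset.prod_range_succ _ _
  rw [ef, ef, h2]
  rw [h1]
  have e1 := Pe_ne hq k
  have e2 := fe_ne hq k
  field_simp
  rw [fe, fm]
  ring

lemma df_diff (k : ℕ) :
    df q k - df q (k + 1) = q ^ (k + 1) * Pp q k / (Pe q (k + 1)) ^ 2 := by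
  have h1 : Pe q (k + 1) = Pe q k * fe q k := Finset.prod_range_succ _ _
  have h2 : Pp q (k + 1) = Pp q k * fp q k := Finset.prod_range_succ _ _
  rw [df, df, h2, h1]
  have e1 := Pe_ne hq k
  have e2 := fe_ne hq k
  field_simp
  rw [fe, fp]
  ring


lemma term_eq (i n : ℕ) :
    q ^ (2 * (i + 1) + n) * qPoch (q ^ 3) (q ^ 3) i *
        qPoch q q (i + 1 + n) * qPoch (q ^ 3) (-q ^ 3) (i + n) /
      (qPoch q q i * (qPoch q (-q) (i + 1)) ^ 2 * qPoch q (-q) (i + n) *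
        qPoch (q ^ 3) (q ^ 3) (i + 1 + n))
    = Af q i * (cf q (i + n) - cf q (i + n + 1)) := by
  have hidx : i + 1 + n = i + n + 1 := by omega
  rw [hidx, qPoch_q3, qPoch_qq, qPoch_qq, qPoch_q3m, qPoch_qe, qPoch_qe,
    qPoch_q3, cf_diff hq, Af]
  have hD1 : Pq q i * Pe q (i + 1) ^ 2 * Pe q (i + n) *
      (Pq q (i + n + 1) * Pp q (i + n + 1)) ≠ 0 :=
    mul_ne_zero (mul_ne_zero (mul_ne_zero (Pq_ne hq i)
      (pow_ne_zero 2 (Pe_ne hq (i + 1)))) (Pe_ne hq (i + n)))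
      (mul_ne_zero (Pq_ne hq (i + n + 1)) (Pp_ne hq (i + n + 1)))
  have hD2 : Pe q (i + 1) ^ 2 * Pp q (i + n + 1) ≠ 0 :=
    mul_ne_zero (pow_ne_zero 2 (Pe_ne hq (i + 1))) (Pp_ne hq (i + n + 1))
  rw [div_mul_div_comm, div_eq_div_iff hD1 hD2]
  ring


lemma norm_cf_diff (Bm βp : ℝ) (hβp : 0 < βp) (hBm : ∀ k, ‖Pm q k‖ ≤ Bm)
    (hβp' : ∀ k, βp ≤ ‖Pp q k‖) (k : ℕ) :
    ‖cf q k - cf q (k + 1)‖ ≤ ‖q‖ ^ (k + 1) * Bm / βp := by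
  have hBm0 : 0 ≤ Bm := le_trans (norm_nonneg _) (hBm 0)
  rw [cf_diff hq, norm_div, norm_mul, norm_pow]
  exact div_le_div₀ (mul_nonneg (pow_nonneg (norm_nonneg q) _) hBm0)
    (mul_le_mul_of_nonneg_left (hBm k) (pow_nonneg (norm_nonneg q) _))
    hβp (hβp' (k + 1))

lemma norm_Af (Bp βe : ℝ) (hβe : 0 < βe) (hBp : ∀ k, ‖Pp q k‖ ≤ Bp)
    (hβe' : ∀ k, βe ≤ ‖Pe q k‖) (i : ℕ) :
    ‖Af q i‖ ≤ ‖q‖ ^ (i + 1) * Bp / βe ^ 2 := by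
  have hBp0 : 0 ≤ Bp := le_trans (norm_nonneg _) (hBp 0)
  rw [Af, norm_div, norm_mul, norm_pow, norm_pow]
  exact div_le_div₀ (mul_nonneg (pow_nonneg (norm_nonneg q) _) hBp0)
    (mul_le_mul_of_nonneg_left (hBp i) (pow_nonneg (norm_nonneg q) _))
    (pow_pos hβe 2) (pow_le_pow_left₀ hβe.le (hβe' (i + 1)) 2)

end main

end DS1

open DS1 in
theorem thmDS1_c (q : ℂ) (hq : ‖q‖ < 1) :
    ∑' p : ℕ × ℕ,
      q ^ (2 * (p.1 + 1) + p.2) * qPoch (q ^ 3) (q ^ 3) p.1 *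
        qPoch q q (p.1 + 1 + p.2) * qPoch (q ^ 3) (-q ^ 3) (p.1 + p.2) /
      (qPoch q q p.1 * (qPoch q (-q) (p.1 + 1)) ^ 2 * qPoch q (-q) (p.1 + p.2) *
        qPoch (q ^ 3) (q ^ 3) (p.1 + 1 + p.2))
    = (1 / 3) * qPochInf (q ^ 3) (-q ^ 3) / (qPochInf q (-q)) ^ 3
      - (1 / 2) * (qPochInf (q ^ 3) (-q ^ 3) * qPochInf q q) /
          (qPochInf (q ^ 3) (q ^ 3) * qPochInf q (-q))
      + 1 / 6 := by
  have hq' : ‖q‖ < 1 := hq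
  set M : ℂ := ∏' j, fm q j with hM
  set P : ℂ := ∏' j, fp q j with hP
  set E : ℂ := ∏' j, fe q j with hE
  set Q : ℂ := ∏' j, fq q j with hQ
  have hMne : M ≠ 0 := (mult_fm hq').2
  have hPne : P ≠ 0 := (mult_fp hq').2
  have hEne : E ≠ 0 := (mult_fe hq').2
  have hQne : Q ≠ 0 := (mult_fq hq').2
  -- bounds
  obtain ⟨Bm, βm, hβm, hBm, hβm'⟩ :=
    bound_of_tendsto (Pm q) M (tendsto_Pm hq') (Pm_ne hq') hMne
  obtain ⟨Bp, βp, hβp, hBp, hβp'⟩ :=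
    bound_of_tendsto (Pp q) P (tendsto_Pp hq') (Pp_ne hq') hPne
  obtain ⟨Be, βe, hβe, hBe, hβe'⟩ :=
    bound_of_tendsto (Pe q) E (tendsto_Pe hq') (Pe_ne hq') hEne
  have hBm0 : 0 ≤ Bm := le_trans (norm_nonneg _) (hBm 0)
  have hBp0 : 0 ≤ Bp := le_trans (norm_nonneg _) (hBp 0)
  have hq0 : (0:ℝ) ≤ ‖q‖ := norm_nonneg q
  have hgeo : Summable (fun n : ℕ => ‖q‖ ^ n) :=
    summable_geometric_of_lt_one hq0 hq'
  -- limit of cf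
  set L : ℂ := 1 / 2 * M / P with hL
  have hcL : Tendsto (cf q) atTop (𝓝 L) := by
    have : Tendsto (fun k => 1 / 2 * Pm q k / Pp q k) atTop (𝓝 (1 / 2 * M / P)) :=
      (tendsto_const_nhds.mul (tendsto_Pm hq')).div (tendsto_Pp hq') hPne
    exact this
  -- inner HasSum
  have hinner : ∀ i : ℕ,
      HasSum (fun n => Af q i * (cf q (i + n) - cf q (i + n + 1)))
        (Af q i * (cf q i - L)) := by
    intro i
    refine HasSum.mul_left _ ?_
    have hgi : Tendsto (fun n => cf q (i + n)) atTop (𝓝 L) :=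
      (hcL.comp (tendsto_add_atTop_nat i)).congr fun n => by
        simp only [Function.comp_apply, Nat.add_comm]
    have hsi : Summable (fun n => cf q (i + n) - cf q (i + n + 1)) := by
      refine Summable.of_norm_bounded (g := fun n => Bm / βp * ‖q‖ ^ n)
        (hgeo.mul_left _) (fun n => ?_)
      calc ‖cf q (i + n) - cf q (i + n + 1)‖
          ≤ ‖q‖ ^ (i + n + 1) * Bm / βp :=
            norm_cf_diff hq' Bm βp hβp hBm hβp' (i + n)
        _ ≤ ‖q‖ ^ n * Bm / βp := by
            have hp : ‖q‖ ^ (i + n + 1) ≤ ‖q‖ ^ n :=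
              pow_le_pow_of_le_one hq0 hq'.le (by omega)
            rw [div_eq_mul_inv, div_eq_mul_inv]
            exact mul_le_mul_of_nonneg_right
              (mul_le_mul_of_nonneg_right hp hBm0) (inv_nonneg.2 hβp.le)
        _ = Bm / βp * ‖q‖ ^ n := by ring
    exact telescope (fun n => cf q (i + n)) L hgi hsi
  -- the double sum function
  set F : ℕ × ℕ → ℂ :=
    fun p => Af q p.1 * (cf q (p.1 + p.2) - cf q (p.1 + p.2 + 1)) with hF
  have hFs : Summable F := by
    refine Summable.of_norm_bounded
      (g := fun p : ℕ × ℕ => Bp * Bm / (βe ^ 2 * βp) * (‖q‖ ^ p.1 * ‖q‖ ^ p.2))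
      ((hgeo.mul_of_nonneg hgeo (fun n => pow_nonneg hq0 n)
        (fun n => pow_nonneg hq0 n)).mul_left _) (fun p => ?_)
    obtain ⟨i, n⟩ := p
    have h1 : ‖Af q i‖ ≤ ‖q‖ ^ (i + 1) * Bp / βe ^ 2 :=
      norm_Af hq' Bp βe hβe hBp hβe' i
    have h2 : ‖cf q (i + n) - cf q (i + n + 1)‖ ≤ ‖q‖ ^ (i + n + 1) * Bm / βp :=
      norm_cf_diff hq' Bm βp hβp hBm hβp' (i + n)
    calc ‖F (i, n)‖ = ‖Af q i‖ * ‖cf q (i + n) - cf q (i + n + 1)‖ := norm_mul _ _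
      _ ≤ (‖q‖ ^ (i + 1) * Bp / βe ^ 2) * (‖q‖ ^ (i + n + 1) * Bm / βp) :=
          mul_le_mul h1 h2 (norm_nonneg _) (by positivity)
      _ = Bp * Bm / (βe ^ 2 * βp) * (‖q‖ ^ (i + 1) * ‖q‖ ^ (i + n + 1)) := by ring
      _ ≤ Bp * Bm / (βe ^ 2 * βp) * (‖q‖ ^ i * ‖q‖ ^ n) := by
          have hp1 : ‖q‖ ^ (i + 1) ≤ ‖q‖ ^ i :=
            pow_le_pow_of_le_one hq0 hq'.le (by omega)
          have hp2 : ‖q‖ ^ (i + n + 1) ≤ ‖q‖ ^ n :=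
            pow_le_pow_of_le_one hq0 hq'.le (by omega)
          refine mul_le_mul_of_nonneg_left
            (mul_le_mul hp1 hp2 (pow_nonneg hq0 _) (pow_nonneg hq0 _)) ?_
          exact div_nonneg (mul_nonneg hBp0 hBm0) (by positivity)
  -- outer telescoping values
  set Le : ℂ := 1 / 3 * M / E ^ 2 with hLe
  set Ld : ℂ := P / E ^ 2 with hLd
  have heL : Tendsto (ef q) atTop (𝓝 Le) := by
    have : Tendsto (fun k => 1 / 3 * Pm q k / (Pe q k) ^ 2) atTop (𝓝 (1 / 3 * M / E ^ 2)) :=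
      (tendsto_const_nhds.mul (tendsto_Pm hq')).div ((tendsto_Pe hq').pow 2)
        (pow_ne_zero 2 hEne)
    exact this
  have hdL : Tendsto (df q) atTop (𝓝 Ld) := by
    have : Tendsto (fun k => Pp q k / (Pe q k) ^ 2) atTop (𝓝 (P / E ^ 2)) :=
      (tendsto_Pp hq').div ((tendsto_Pe hq').pow 2) (pow_ne_zero 2 hEne)
    exact this
  have hes : Summable (fun i => ef q i - ef q (i + 1)) := by
    refine Summable.of_norm_bounded (g := fun i => Bm / βe ^ 2 * ‖q‖ ^ i)
      (hgeo.mul_left _) (fun i => ?_)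
    rw [ef_diff hq', norm_div, norm_mul, norm_pow, norm_pow]
    calc ‖q‖ ^ (i + 1) * ‖Pm q i‖ / ‖Pe q (i + 1)‖ ^ 2
        ≤ ‖q‖ ^ i * Bm / βe ^ 2 := by
          have hp : ‖q‖ ^ (i + 1) ≤ ‖q‖ ^ i :=
            pow_le_pow_of_le_one hq0 hq'.le (by omega)
          exact div_le_div₀ (mul_nonneg (pow_nonneg hq0 _) hBm0)
            (mul_le_mul hp (hBm i) (norm_nonneg _) (pow_nonneg hq0 _))
            (pow_pos hβe 2) (pow_le_pow_left₀ hβe.le (hβe' (i + 1)) 2)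
      _ = Bm / βe ^ 2 * ‖q‖ ^ i := by ring
  have hds : Summable (fun i => df q i - df q (i + 1)) := by
    refine Summable.of_norm_bounded (g := fun i => Bp / βe ^ 2 * ‖q‖ ^ i)
      (hgeo.mul_left _) (fun i => ?_)
    rw [df_diff hq', norm_div, norm_mul, norm_pow, norm_pow]
    calc ‖q‖ ^ (i + 1) * ‖Pp q i‖ / ‖Pe q (i + 1)‖ ^ 2
        ≤ ‖q‖ ^ i * Bp / βe ^ 2 := by
          have hp : ‖q‖ ^ (i + 1) ≤ ‖q‖ ^ i :=
            pow_le_pow_of_le_one hq0 hq'.le (by omega)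
          exact div_le_div₀ (mul_nonneg (pow_nonneg hq0 _) hBp0)
            (mul_le_mul hp (hBp i) (norm_nonneg _) (pow_nonneg hq0 _))
            (pow_pos hβe 2) (pow_le_pow_left₀ hβe.le (hβe' (i + 1)) 2)
      _ = Bp / βe ^ 2 * ‖q‖ ^ i := by ring
  have hesum : HasSum (fun i => ef q i - ef q (i + 1)) (ef q 0 - Le) :=
    telescope (ef q) Le heL hes
  have hdsum : HasSum (fun i => df q i - df q (i + 1)) (df q 0 - Ld) :=
    telescope (df q) Ld hdL hds
  -- per-term outer identity
  have hterm2 : ∀ i, Af q i * (cf q i - L) =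
      1 / 2 * (ef q i - ef q (i + 1)) - L * (df q i - df q (i + 1)) := by
    intro i
    have t2 : df q i - df q (i + 1) = Af q i := by rw [df_diff hq', Af]
    have t1 : Af q i * cf q i = 1 / 2 * (ef q i - ef q (i + 1)) := by
      rw [ef_diff hq', Af, cf]
      have h1 := Pe_ne hq' (i + 1)
      have h2 := Pp_ne hq' i
      field_simp
    rw [mul_sub, t1, t2]
    ring
  -- outer HasSum value
  have houter : HasSum (fun i => Af q i * (cf q i - L))
      (1 / 2 * (ef q 0 - Le) - L * (df q 0 - Ld)) := by
    have h := (hesum.mul_left (1 / 2)).sub (hdsum.mul_left L)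
    simp only [hterm2]
    exact h
  -- assemble the double sum
  have hsum_eq : (∑' p : ℕ × ℕ,
      q ^ (2 * (p.1 + 1) + p.2) * qPoch (q ^ 3) (q ^ 3) p.1 *
        qPoch q q (p.1 + 1 + p.2) * qPoch (q ^ 3) (-q ^ 3) (p.1 + p.2) /
      (qPoch q q p.1 * (qPoch q (-q) (p.1 + 1)) ^ 2 * qPoch q (-q) (p.1 + p.2) *
        qPoch (q ^ 3) (q ^ 3) (p.1 + 1 + p.2)))
      = 1 / 2 * (ef q 0 - Le) - L * (df q 0 - Ld) := by
    calc (∑' p : ℕ × ℕ,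
      q ^ (2 * (p.1 + 1) + p.2) * qPoch (q ^ 3) (q ^ 3) p.1 *
        qPoch q q (p.1 + 1 + p.2) * qPoch (q ^ 3) (-q ^ 3) (p.1 + p.2) /
      (qPoch q q p.1 * (qPoch q (-q) (p.1 + 1)) ^ 2 * qPoch q (-q) (p.1 + p.2) *
        qPoch (q ^ 3) (q ^ 3) (p.1 + 1 + p.2)))
        = ∑' p : ℕ × ℕ, F p := tsum_congr (fun p => term_eq hq' p.1 p.2)
      _ = ∑' i, ∑' n, F (i, n) :=
          Summable.tsum_prod' hFs (fun i => (hinner i).summable)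
      _ = ∑' i, Af q i * (cf q i - L) :=
          tsum_congr (fun i => (hinner i).tsum_eq)
      _ = 1 / 2 * (ef q 0 - Le) - L * (df q 0 - Ld) := houter.tsum_eq
  rw [hsum_eq]
  -- rewrite the RHS infinite products
  have hr1 : qPochInf q (-q) = E := by
    rw [qPochInf, hE]
    exact tprod_congr fun j => by rw [fe, pow_succ]; ring
  have hr2 : qPochInf q q = Q := by
    rw [qPochInf, hQ]
    exact tprod_congr fun j => by rw [fq, pow_succ]; ring
  have hr3 : qPochInf (q ^ 3) (-q ^ 3) = E * M := by
    rw [qPochInf]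
    have h1 : ∏' j : ℕ, (1 - (-q ^ 3) * (q ^ 3) ^ j) = ∏' j : ℕ, (fe q j * fm q j) :=
      tprod_congr fun j => cube2 q j
    rw [h1, Multipliable.tprod_mul (mult_fe hq').1 (mult_fm hq').1]
  have hr4 : qPochInf (q ^ 3) (q ^ 3) = Q * P := by
    rw [qPochInf]
    have h1 : ∏' j : ℕ, (1 - q ^ 3 * (q ^ 3) ^ j) = ∏' j : ℕ, (fq q j * fp q j) :=
      tprod_congr fun j => cube1 q j
    rw [h1, Multipliable.tprod_mul (mult_fq hq').1 (mult_fp hq').1]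
  rw [hr1, hr2, hr3, hr4]
  have he0 : ef q 0 = 1 / 3 := by simp [ef, Pm, Pe]
  have hd0 : df q 0 = 1 := by simp [df, Pp, Pe]
  rw [he0, hd0, hLe, hLd, hL]
  have final : ∀ Ez Pz Qz Mz : ℂ, Ez ≠ 0 → Pz ≠ 0 → Qz ≠ 0 →
      1 / 2 * (1 / 3 - 1 / 3 * Mz / Ez ^ 2) - 1 / 2 * Mz / Pz * (1 - Pz / Ez ^ 2)
        = 1 / 3 * (Ez * Mz) / Ez ^ 3
          - 1 / 2 * (Ez * Mz * Qz) / (Qz * Pz * Ez) + 1 / 6 := by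
    intro Ez Pz Qz Mz hE0 hP0 hQ0
    have hA : 1 / 3 * (Ez * Mz) / Ez ^ 3 = 1 / 3 * Mz / Ez ^ 2 := by
      rw [div_eq_div_iff (pow_ne_zero 3 hE0) (pow_ne_zero 2 hE0)]; ring
    have hB : 1 / 2 * (Ez * Mz * Qz) / (Qz * Pz * Ez) = 1 / 2 * Mz / Pz := by
      rw [div_eq_div_iff (mul_ne_zero (mul_ne_zero hQ0 hP0) hE0) hP0]; ring
    have hC : 1 / 2 * Mz / Pz * (1 - Pz / Ez ^ 2)
        = 1 / 2 * Mz / Pz - 1 / 2 * Mz / Ez ^ 2 := by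
      rw [mul_sub, mul_one]
      congr 1
      rw [div_mul_div_comm,
        div_eq_div_iff (mul_ne_zero hP0 (pow_ne_zero 2 hE0)) (pow_ne_zero 2 hE0)]
      ring
    rw [hC, hA, hB]
    ring
  exact final E P Q M hEne hPne hQne
end

section
/- For every complex number q with |q| < 1 (with values of q making any denominator factor 1 + q^j vanish excluded), ∑_{m≥1, n≥0} q^{2m+n} (−q; q)_m (−q; q)_{m−1}^2 (q^3; q^3)_{m+n−1} / [ (−q^3; q^3)_m (q; q)_{m+n−1} (−q; q)_{m+n}^2 ] = (1/6)·(−q; q)_∞ (q^3; q^3)_∞ / [ (q; q)_∞ (−q^3; q^3)_∞ ] + (1/3)·(q^3; q^3)_∞ / [ (−q; q)_∞ (q^2; q^2)_∞ ] − 1/2. -/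
open Filter Topology Finset

namespace DS2aux

lemma qPoch_zero (q a : ℂ) : qPoch q a 0 = 1 := by simp [qPoch]

lemma qPoch_succ (q a : ℂ) (n : ℕ) :
    qPoch q a (n + 1) = qPoch q a n * (1 - a * q ^ n) := Finset.prod_range_succ _ _

/-- boundedness hypothesis on the factors -/
def Bnd (r : ℝ) (x a : ℂ) : Prop := ∀ j : ℕ, ‖a * x ^ j‖ ≤ r ^ (j + 1)

section r
variable {r : ℝ} (h0 : 0 ≤ r) (h1 : r < 1) {x a : ℂ} (H : Bnd r x a)
include h0 h1 H

lemma fac_abs_lt (j : ℕ) : ‖a * x ^ j‖ < 1 :=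
  lt_of_le_of_lt (H j) (pow_lt_one₀ h0 h1 (Nat.succ_ne_zero j))

lemma fac_ne (j : ℕ) : 1 - a * x ^ j ≠ 0 := by
  intro h
  have h2 : (1 : ℂ) = a * x ^ j := by linear_combination h
  have := fac_abs_lt h0 h1 H j
  rw [← h2] at this
  simp at this

lemma qPoch_ne (n : ℕ) : qPoch x a n ≠ 0 :=
  Finset.prod_ne_zero_iff.mpr fun j _ => fac_ne h0 h1 H j

omit H
lemma exp_le_one_sub {t : ℝ} (ht0 : 0 ≤ t) (ht1 : t ≤ r) :
    Real.exp (-(t / (1 - r))) ≤ 1 - t := by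
  have h2 : (0:ℝ) < 1 - r := by linarith
  have h3 : t / (1 - r) + 1 ≤ Real.exp (t / (1 - r)) := Real.add_one_le_exp _
  have h4 : (0:ℝ) < 1 + t / (1 - r) := by positivity
  rw [Real.exp_neg]
  have h5 : (Real.exp (t / (1 - r)))⁻¹ ≤ (1 + t / (1 - r))⁻¹ := by
    apply inv_anti₀ h4; linarith
  refine h5.trans ?_
  rw [inv_le_iff_one_le_mul₀ h4]
  have e : (1 - t) * (1 + t / (1 - r)) = 1 + t * (r - t) / (1 - r) := by field_simp; ring
  rw [e]
  have h6 : 0 ≤ t * (r - t) / (1 - r) := div_nonneg (mul_nonneg ht0 (by linarith)) h2.le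
  linarith

lemma sum_pow_le (n : ℕ) : ∑ j ∈ Finset.range n, r ^ (j + 1) ≤ r / (1 - r) := by
  have h2 : ∑ j ∈ Finset.range n, r ^ (j+1) = r * ∑ j ∈ Finset.range n, r ^ j := by
    rw [Finset.mul_sum]; exact Finset.sum_congr rfl fun j _ => by ring
  rw [h2, div_eq_mul_inv]
  apply mul_le_mul_of_nonneg_left _ h0
  calc ∑ j ∈ Finset.range n, r ^ j ≤ ∑' j : ℕ, r ^ j :=
        (summable_geometric_of_lt_one h0 h1).sum_le_tsum _ (fun i _ => pow_nonneg h0 i)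
    _ = (1 - r)⁻¹ := tsum_geometric_of_lt_one h0 h1

include H
lemma qPoch_abs_le (n : ℕ) : ‖qPoch x a n‖ ≤ Real.exp (r / (1 - r)) := by
  rw [qPoch, norm_prod]
  calc ∏ j ∈ Finset.range n, ‖1 - a * x ^ j‖
      ≤ ∏ j ∈ Finset.range n, Real.exp (r ^ (j + 1)) := by
        apply Finset.prod_le_prod (fun j _ => norm_nonneg _)
        intro j _
        calc ‖1 - a * x ^ j‖ ≤ ‖(1:ℂ)‖ + ‖a * x ^ j‖ := norm_sub_le _ _
          _ ≤ 1 + r ^ (j + 1) := by rw [norm_one]; linarith [H j]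
          _ ≤ Real.exp (r ^ (j + 1)) := by
              have := Real.add_one_le_exp (r ^ (j+1)); linarith
    _ = Real.exp (∑ j ∈ Finset.range n, r ^ (j + 1)) := (Real.exp_sum _ _).symm
    _ ≤ Real.exp (r / (1 - r)) := Real.exp_le_exp.mpr (sum_pow_le h0 h1 n)

lemma qPoch_abs_ge (n : ℕ) : Real.exp (-(r / ((1 - r) * (1 - r)))) ≤ ‖qPoch x a n‖ := by
  rw [qPoch, norm_prod]
  calc Real.exp (-(r / ((1 - r) * (1 - r))))
      ≤ Real.exp (∑ j ∈ Finset.range n, -(r ^ (j + 1) / (1 - r))) := by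
        apply Real.exp_le_exp.mpr
        rw [Finset.sum_neg_distrib]
        apply neg_le_neg
        have := sum_pow_le h0 h1 n
        calc ∑ j ∈ Finset.range n, r ^ (j + 1) / (1 - r)
            = (∑ j ∈ Finset.range n, r ^ (j + 1)) / (1 - r) := (Finset.sum_div _ _ _).symm
          _ ≤ (r / (1 - r)) / (1 - r) := by
              have h2 : (0:ℝ) < 1 - r := by linarith
              gcongr
          _ = r / ((1 - r) * (1 - r)) := by rw [div_div]
    _ = ∏ j ∈ Finset.range n, Real.exp (-(r ^ (j + 1) / (1 - r))) := Real.exp_sum _ _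
    _ ≤ ∏ j ∈ Finset.range n, ‖1 - a * x ^ j‖ := by
        apply Finset.prod_le_prod (fun j _ => (Real.exp_pos _).le)
        intro j _
        have hle : r ^ (j + 1) ≤ r := pow_le_of_le_one h0 h1.le (Nat.succ_ne_zero j)
        calc Real.exp (-(r ^ (j + 1) / (1 - r))) ≤ 1 - r ^ (j + 1) :=
              exp_le_one_sub h0 h1 (pow_nonneg h0 _) hle
          _ ≤ 1 - ‖a * x ^ j‖ := by linarith [H j]
          _ ≤ ‖1 - a * x ^ j‖ := by
              have := norm_sub_norm_le (1 : ℂ) (a * x ^ j)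
              rw [norm_one] at this; linarith

lemma summable_log : Summable fun j : ℕ => Complex.log (1 - a * x ^ j) := by
  have h2 : (0:ℝ) < 1 - r := by linarith
  apply Summable.of_norm
  apply Summable.of_nonneg_of_le (fun j => norm_nonneg _)
    (f := fun j : ℕ => ((1 - r)⁻¹ / 2 + 1) * r ^ (j + 1))
  · intro j
    have hz : ‖-(a * x ^ j)‖ < 1 := by
      rw [norm_neg]; exact fac_abs_lt h0 h1 H j
    have hb : ‖-(a * x ^ j)‖ ≤ r ^ (j + 1) := by rw [norm_neg]; exact H j
    have key : (1 : ℂ) - a * x ^ j = 1 + -(a * x ^ j) := by ring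
    rw [key]
    refine (Complex.norm_log_one_add_le hz).trans ?_
    set z := ‖-(a * x ^ j)‖ with hzdef
    have hz0 : 0 ≤ z := norm_nonneg _
    have hrj : r ^ (j + 1) ≤ r := pow_le_of_le_one h0 h1.le (Nat.succ_ne_zero j)
    have hinv : (1 - z)⁻¹ ≤ (1 - r)⁻¹ := by
      apply inv_anti₀ (by linarith) (by linarith)
    have hz2 : z ^ 2 ≤ r ^ (j + 1) := by
      calc z ^ 2 = z * z := sq z
        _ ≤ r ^ (j+1) * 1 := by
            apply mul_le_mul hb (by linarith) hz0 (by positivity)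
        _ = r ^ (j+1) := mul_one _
    calc z ^ 2 * (1 - z)⁻¹ / 2 + z
        ≤ r ^ (j + 1) * (1 - r)⁻¹ / 2 + r ^ (j + 1) := by
          apply add_le_add _ hb
          have h3 : (0:ℝ) < 2 := by norm_num
          have h5 : (0:ℝ) ≤ (1 - z)⁻¹ := inv_nonneg.mpr (by linarith)
          have h4 : z ^ 2 * (1 - z)⁻¹ ≤ r ^ (j + 1) * (1 - r)⁻¹ :=
            mul_le_mul hz2 hinv h5 (by positivity)
          linarith
      _ = ((1 - r)⁻¹ / 2 + 1) * r ^ (j + 1) := by ring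
  · apply Summable.mul_left
    have : Summable fun j : ℕ => r ^ j := summable_geometric_of_lt_one h0 h1
    have := this.mul_left r
    apply this.congr
    intro j; ring
lemma hasProd_qPochInf : HasProd (fun j : ℕ => 1 - a * x ^ j) (qPochInf x a) := by
  have hm : Multipliable fun j : ℕ => 1 - a * x ^ j := by
    have := Complex.multipliable_of_summable_log (summable_log h0 h1 H)
    exact this
  exact hm.hasProd

lemma tendsto_qPoch : Tendsto (fun n => qPoch x a n) atTop (𝓝 (qPochInf x a)) :=
  (hasProd_qPochInf h0 h1 H).tendsto_prod_nat

lemma qPochInf_abs_ge : Real.exp (-(r / ((1 - r) * (1 - r)))) ≤ ‖qPochInf x a‖ := by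
  exact ge_of_tendsto' ((tendsto_qPoch h0 h1 H).norm) (fun n => qPoch_abs_ge h0 h1 H n)

lemma qPochInf_ne : qPochInf x a ≠ 0 := by
  intro h
  have := qPochInf_abs_ge h0 h1 H
  rw [h] at this
  simp at this
  exact absurd this (not_le.mpr (Real.exp_pos _))

end r

/-- the standard bound instances -/
lemma bnd_self {q : ℂ} (hq : ‖q‖ < 1) (s : ℕ) (hs : 1 ≤ s) (ε : ℂ) (hε : ε = 1 ∨ ε = -1) :
    Bnd ‖q‖ (q ^ s) (ε * q ^ s) := by
  intro j
  have h0 : (0:ℝ) ≤ ‖q‖ := norm_nonneg q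
  have : ‖ε * q ^ s * (q ^ s) ^ j‖ = ‖q‖ ^ (s * (j + 1)) := by
    rcases hε with h | h <;> subst h <;>
      simp [norm_mul, norm_pow, ← pow_mul] <;> ring_nf
  rw [this]
  apply pow_le_pow_of_le_one h0 hq.le
  calc j + 1 ≤ s * (j + 1) := Nat.le_mul_of_pos_left _ (by omega)

noncomputable def aE (q : ℂ) (m : ℕ) : ℂ := qPoch q (-q) m ^ 3 / qPoch (q^3) (-q^3) m
noncomputable def ag (q : ℂ) (k : ℕ) : ℂ :=
  q^k * qPoch (q^3) (q^3) k / (qPoch q q k * (qPoch q (-q) (k+1))^2)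
noncomputable def aR (q : ℂ) (k : ℕ) : ℂ :=
  qPoch q (-q) k * qPoch (q^3) (q^3) k / (qPoch q q k * qPoch (q^3) (-q^3) k)
noncomputable def aQ (q : ℂ) (k : ℕ) : ℂ :=
  qPoch (q^3) (q^3) k / (qPoch (q^2) (q^2) k * qPoch q (-q) k)

section algebra
variable {q : ℂ} (hq : ‖q‖ < 1)

include hq

lemma bnd_p1 : Bnd ‖q‖ q q := by
  have := bnd_self hq 1 le_rfl 1 (Or.inl rfl); simpa using this
lemma bnd_m1 : Bnd ‖q‖ q (-q) := by
  have := bnd_self hq 1 le_rfl (-1) (Or.inr rfl); simpa using this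
lemma bnd_p2 : Bnd ‖q‖ (q^2) (q^2) := by
  have := bnd_self hq 2 (by norm_num) 1 (Or.inl rfl); simpa using this
lemma bnd_p3 : Bnd ‖q‖ (q^3) (q^3) := by
  have := bnd_self hq 3 (by norm_num) 1 (Or.inl rfl); simpa using this
lemma bnd_m3 : Bnd ‖q‖ (q^3) (-q^3) := by
  have := bnd_self hq 3 (by norm_num) (-1) (Or.inr rfl); simpa using this

lemma ne_p1 (n : ℕ) : qPoch q q n ≠ 0 := qPoch_ne (norm_nonneg q) hq (bnd_p1 hq) n
lemma ne_m1 (n : ℕ) : qPoch q (-q) n ≠ 0 := qPoch_ne (norm_nonneg q) hq (bnd_m1 hq) n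
lemma ne_p2 (n : ℕ) : qPoch (q^2) (q^2) n ≠ 0 := qPoch_ne (norm_nonneg q) hq (bnd_p2 hq) n
lemma ne_p3 (n : ℕ) : qPoch (q^3) (q^3) n ≠ 0 := qPoch_ne (norm_nonneg q) hq (bnd_p3 hq) n
lemma ne_m3 (n : ℕ) : qPoch (q^3) (-q^3) n ≠ 0 := qPoch_ne (norm_nonneg q) hq (bnd_m3 hq) n

lemma fne_p1 (n : ℕ) : 1 - q * q ^ n ≠ 0 := fac_ne (norm_nonneg q) hq (bnd_p1 hq) n
lemma fne_m1 (n : ℕ) : 1 - (-q) * q ^ n ≠ 0 := fac_ne (norm_nonneg q) hq (bnd_m1 hq) n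
lemma fne_p3 (n : ℕ) : 1 - q^3 * (q^3) ^ n ≠ 0 := fac_ne (norm_nonneg q) hq (bnd_p3 hq) n
lemma fne_m3 (n : ℕ) : 1 - (-q^3) * (q^3) ^ n ≠ 0 := fac_ne (norm_nonneg q) hq (bnd_m3 hq) n

omit hq in
lemma I1 (q : ℂ) (k : ℕ) : qPoch (q^2) (q^2) k = qPoch q q k * qPoch q (-q) k := by
  induction k with
  | zero => simp [qPoch_zero]
  | succ n ih => rw [qPoch_succ, qPoch_succ, qPoch_succ, ih]; ring

lemma Ldelta (m : ℕ) :
    aE q (m+1) - aE q m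
      = 3 * q^(m+1) * (qPoch q (-q) m)^2 * qPoch q (-q) (m+1) / qPoch (q^3) (-q^3) (m+1) := by
  have h1 := ne_m1 hq m
  have h2 := ne_m3 hq m
  have h3 := fne_m1 hq m
  have h4 := fne_m3 hq m
  rw [aE, aE, qPoch_succ q (-q) m, qPoch_succ (q^3) (-q^3) m]
  set u := 1 - (-q) * q ^ m with hu
  set v := 1 - (-q^3) * (q^3) ^ m with hv
  field_simp
  rw [hu, hv]
  ring

lemma L2 (k : ℕ) :
    2 * q * (aE q (k+1) * ag q k) = aR q (k+1) - aR q k := by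
  have h1 := ne_m1 hq k
  have h2 := ne_m3 hq k
  have h2' := ne_p1 hq k
  have h3 := fne_m1 hq k
  have h4 := fne_m3 hq k
  have h5 := fne_p1 hq k
  rw [aE, ag, aR, aR, qPoch_succ q (-q) k, qPoch_succ (q^3) (-q^3) k,
    qPoch_succ q q k, qPoch_succ (q^3) (q^3) k]
  set u := 1 - (-q) * q ^ k with hu
  set v := 1 - (-q^3) * (q^3) ^ k with hv
  set w := 1 - q * q ^ k with hw
  set z := 1 - q^3 * (q^3) ^ k with hz
  field_simp
  rw [hu, hv, hw, hz]
  ring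

lemma L3 (k : ℕ) : q * ag q k = aQ q k - aQ q (k+1) := by
  have h1 := ne_m1 hq k
  have h2' := ne_p1 hq k
  have h2 := ne_p3 hq k
  have h3 := fne_m1 hq k
  have h5 := fne_p1 hq k
  rw [ag, aQ, aQ, I1, I1, qPoch_succ q (-q) k, qPoch_succ q q k, qPoch_succ (q^3) (q^3) k]
  have hD1 : qPoch q q k * (qPoch q (-q) k * (1 - -q * q ^ k)) ^ 2 ≠ 0 :=
    mul_ne_zero h2' (pow_ne_zero _ (mul_ne_zero h1 (by simpa using h3)))
  have hD2 : qPoch q q k * qPoch q (-q) k * qPoch q (-q) k ≠ 0 :=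
    mul_ne_zero (mul_ne_zero h2' h1) h1
  have hD3 : qPoch q q k * (1 - q * q ^ k) * (qPoch q (-q) k * (1 - -q * q ^ k)) *
      (qPoch q (-q) k * (1 - -q * q ^ k)) ≠ 0 :=
    mul_ne_zero (mul_ne_zero (mul_ne_zero h2' h5) (mul_ne_zero h1 (by simpa using h3)))
      (mul_ne_zero h1 (by simpa using h3))
  rw [mul_div_assoc', div_sub_div _ _ hD2 hD3, div_eq_div_iff hD1 (mul_ne_zero hD2 hD3)]
  ring

lemma L1 (mm n : ℕ) :
    q ^ (2 * (mm + 1) + n) * qPoch q (-q) (mm + 1) * (qPoch q (-q) mm) ^ 2 *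
        qPoch (q ^ 3) (q ^ 3) (mm + n) /
      (qPoch (q ^ 3) (-q ^ 3) (mm + 1) * qPoch q q (mm + n) *
        (qPoch q (-q) (mm + 1 + n)) ^ 2)
    = (q/3) * ((aE q (mm+1) - aE q mm) * ag q (mm+n)) := by
  have hidx : mm + 1 + n = (mm + n) + 1 := by omega
  have h1 := ne_m1 hq (mm+1)
  have h2 := ne_m3 hq (mm+1)
  have h3 := ne_p1 hq (mm+n)
  have h4 := ne_m1 hq (mm+n+1)
  have hDL : qPoch (q^3) (-q^3) (mm+1) * qPoch q q (mm+n) * qPoch q (-q) (mm+n+1) ^ 2 ≠ 0 :=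
    mul_ne_zero (mul_ne_zero h2 h3) (pow_ne_zero _ h4)
  have hDR : (3:ℂ) * (qPoch (q^3) (-q^3) (mm+1) * (qPoch q q (mm+n) * qPoch q (-q) (mm+n+1) ^ 2)) ≠ 0 :=
    mul_ne_zero (by norm_num) (mul_ne_zero h2 (mul_ne_zero h3 (pow_ne_zero _ h4)))
  rw [hidx, Ldelta hq mm, ag, div_mul_div_comm, div_mul_div_comm,
    div_eq_div_iff hDL hDR]
  ring

omit hq in
lemma abel (E g : ℕ → ℂ) (G0 : ℂ) (hE0 : E 0 = 1) (M : ℕ) :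
    ∑ i ∈ Finset.range M, (E (i+1) - E i) * (G0 - ∑ k ∈ Finset.range i, g k)
      = G0 * E M - G0 - E M * ∑ k ∈ Finset.range M, g k
        + ∑ i ∈ Finset.range M, E (i+1) * g i := by
  induction M with
  | zero => simp [hE0]
  | succ M ih =>
      rw [Finset.sum_range_succ, ih, Finset.sum_range_succ g,
        Finset.sum_range_succ (fun i => E (i+1) * g i)]
      ring

end algebra

section analytic
variable {q : ℂ} (hq : ‖q‖ < 1)

noncomputable def cc (q : ℂ) : ℝ := Real.exp (-(‖q‖ / ((1 - ‖q‖) * (1 - ‖q‖))))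
noncomputable def CC (q : ℂ) : ℝ := Real.exp (‖q‖ / (1 - ‖q‖))

lemma cc_pos : 0 < cc q := Real.exp_pos _
lemma CC_pos : 0 < CC q := Real.exp_pos _

include hq

lemma norm_ag_le (k : ℕ) : ‖ag q k‖ ≤ CC q / (cc q)^3 * ‖q‖ ^ k := by
  have h0 := norm_nonneg q
  have hc := cc_pos (q := q)
  have hC := CC_pos (q := q)
  have hup : ‖qPoch (q^3) (q^3) k‖ ≤ CC q := qPoch_abs_le h0 hq (bnd_p3 hq) k
  have hlo1 : cc q ≤ ‖qPoch q q k‖ := qPoch_abs_ge h0 hq (bnd_p1 hq) k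
  have hlo2 : cc q ≤ ‖qPoch q (-q) (k+1)‖ := qPoch_abs_ge h0 hq (bnd_m1 hq) (k+1)
  rw [ag, norm_div, norm_mul, norm_mul, norm_pow, norm_pow]
  have hden : cc q * (cc q)^2 ≤ ‖qPoch q q k‖ * ‖qPoch q (-q) (k+1)‖^2 := by
    apply mul_le_mul hlo1 (pow_le_pow_left₀ hc.le hlo2 2) (by positivity) (norm_nonneg _)
  have hnum : ‖q‖^k * ‖qPoch (q^3) (q^3) k‖ ≤ ‖q‖^k * CC q := by
    apply mul_le_mul_of_nonneg_left hup (by positivity)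
  calc ‖q‖^k * ‖qPoch (q^3) (q^3) k‖ / (‖qPoch q q k‖ * ‖qPoch q (-q) (k+1)‖^2)
      ≤ ‖q‖^k * CC q / (cc q * (cc q)^2) := by
        apply div_le_div₀ (mul_nonneg (pow_nonneg h0 k) hC.le) hnum
          (mul_pos hc (pow_pos hc 2)) hden
    _ = CC q / (cc q)^3 * ‖q‖ ^ k := by field_simp

lemma norm_dE_le (m : ℕ) : ‖aE q (m+1) - aE q m‖ ≤ 3 * (CC q)^3 / cc q * ‖q‖ ^ (m+1) := by
  have h0 := norm_nonneg q
  have hc := cc_pos (q := q)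
  have hC := CC_pos (q := q)
  have hup1 : ‖qPoch q (-q) m‖ ≤ CC q := qPoch_abs_le h0 hq (bnd_m1 hq) m
  have hup2 : ‖qPoch q (-q) (m+1)‖ ≤ CC q := qPoch_abs_le h0 hq (bnd_m1 hq) (m+1)
  have hlo : cc q ≤ ‖qPoch (q^3) (-q^3) (m+1)‖ := qPoch_abs_ge h0 hq (bnd_m3 hq) (m+1)
  rw [Ldelta hq m, norm_div, norm_mul, norm_mul, norm_mul, norm_pow]
  have h3 : ‖(3:ℂ)‖ = 3 := by norm_num
  rw [h3, norm_pow]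
  have hnum : 3 * ‖q‖^(m+1) * ‖qPoch q (-q) m‖^2 * ‖qPoch q (-q) (m+1)‖
      ≤ 3 * ‖q‖^(m+1) * (CC q)^2 * CC q := by
    apply mul_le_mul _ hup2 (norm_nonneg _)
      (mul_nonneg (mul_nonneg (by norm_num) (pow_nonneg h0 _)) (sq_nonneg _))
    apply mul_le_mul_of_nonneg_left (pow_le_pow_left₀ (norm_nonneg _) hup1 2) (by positivity)
  calc 3 * ‖q‖^(m+1) * ‖qPoch q (-q) m‖^2 * ‖qPoch q (-q) (m+1)‖ / ‖qPoch (q^3) (-q^3) (m+1)‖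
      ≤ 3 * ‖q‖^(m+1) * (CC q)^2 * CC q / cc q := by
        apply div_le_div₀
          (mul_nonneg (mul_nonneg (mul_nonneg (by norm_num) (pow_nonneg h0 _)) (sq_nonneg _)) hC.le)
          hnum hc hlo
    _ = 3 * (CC q)^3 / cc q * ‖q‖ ^ (m+1) := by field_simp

lemma norm_aE_le (m : ℕ) : ‖aE q m‖ ≤ (CC q)^3 / cc q := by
  have h0 := norm_nonneg q
  have hc := cc_pos (q := q)
  have hup1 : ‖qPoch q (-q) m‖ ≤ CC q := qPoch_abs_le h0 hq (bnd_m1 hq) m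
  have hlo : cc q ≤ ‖qPoch (q^3) (-q^3) m‖ := qPoch_abs_ge h0 hq (bnd_m3 hq) m
  have hC := CC_pos (q := q)
  rw [aE, norm_div, norm_pow]
  apply div_le_div₀ (pow_nonneg hC.le 3) (pow_le_pow_left₀ (norm_nonneg _) hup1 3) hc hlo

lemma summable_geom_bound (f : ℕ → ℂ) (K : ℝ) (h : ∀ n, ‖f n‖ ≤ K * ‖q‖ ^ n) :
    Summable f := by
  apply Summable.of_norm
  apply Summable.of_nonneg_of_le (fun n => norm_nonneg _) h
  exact (summable_geometric_of_lt_one (norm_nonneg q) hq).mul_left K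

lemma summable_ag : Summable (ag q) :=
  summable_geom_bound hq (ag q) _ (norm_ag_le hq)

lemma summable_V : Summable (fun k => aE q (k+1) * ag q k) := by
  apply summable_geom_bound hq _ ((CC q)^3 / cc q * (CC q / (cc q)^3))
  intro k
  rw [norm_mul]
  calc ‖aE q (k+1)‖ * ‖ag q k‖
      ≤ ((CC q)^3 / cc q) * (CC q / (cc q)^3 * ‖q‖^k) :=
        mul_le_mul (norm_aE_le hq _) (norm_ag_le hq k) (norm_nonneg _)
          (div_nonneg (pow_nonneg (CC_pos (q:=q)).le 3) (cc_pos (q:=q)).le)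
    _ = (CC q)^3 / cc q * (CC q / (cc q)^3) * ‖q‖^k := by ring

lemma tendsto_aE : Tendsto (aE q) atTop
    (𝓝 (qPochInf q (-q) ^ 3 / qPochInf (q^3) (-q^3))) := by
  have h0 := norm_nonneg q
  have h1 := (tendsto_qPoch h0 hq (bnd_m1 hq)).pow 3
  have h2 := tendsto_qPoch h0 hq (bnd_m3 hq)
  have hne := qPochInf_ne h0 hq (bnd_m3 hq)
  exact Tendsto.div h1 h2 hne

lemma tendsto_aR : Tendsto (aR q) atTop
    (𝓝 (qPochInf q (-q) * qPochInf (q^3) (q^3) / (qPochInf q q * qPochInf (q^3) (-q^3)))) := by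
  have h0 := norm_nonneg q
  exact Tendsto.div
    ((tendsto_qPoch h0 hq (bnd_m1 hq)).mul (tendsto_qPoch h0 hq (bnd_p3 hq)))
    ((tendsto_qPoch h0 hq (bnd_p1 hq)).mul (tendsto_qPoch h0 hq (bnd_m3 hq)))
    (mul_ne_zero (qPochInf_ne h0 hq (bnd_p1 hq)) (qPochInf_ne h0 hq (bnd_m3 hq)))

lemma tendsto_aQ : Tendsto (aQ q) atTop
    (𝓝 (qPochInf (q^3) (q^3) / (qPochInf (q^2) (q^2) * qPochInf q (-q)))) := by
  have h0 := norm_nonneg q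
  exact Tendsto.div (tendsto_qPoch h0 hq (bnd_p3 hq))
    ((tendsto_qPoch h0 hq (bnd_p2 hq)).mul (tendsto_qPoch h0 hq (bnd_m1 hq)))
    (mul_ne_zero (qPochInf_ne h0 hq (bnd_p2 hq)) (qPochInf_ne h0 hq (bnd_m1 hq)))

omit hq in
lemma aR_zero : aR q 0 = 1 := by simp [aR, qPoch_zero]
omit hq in
lemma aQ_zero : aQ q 0 = 1 := by simp [aQ, qPoch_zero]
omit hq in
lemma aE_zero : aE q 0 = 1 := by simp [aE, qPoch_zero]

lemma hV : 2 * q * (∑' k, aE q (k+1) * ag q k)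
    = qPochInf q (-q) * qPochInf (q^3) (q^3) / (qPochInf q q * qPochInf (q^3) (-q^3)) - 1 := by
  have hs : Summable (fun k => 2 * q * (aE q (k+1) * ag q k)) := (summable_V hq).mul_left _
  have hten := hs.hasSum.tendsto_sum_nat
  have heq : ∀ K, ∑ k ∈ Finset.range K, 2 * q * (aE q (k+1) * ag q k) = aR q K - 1 := by
    intro K
    rw [Finset.sum_congr rfl (fun k _ => L2 hq k), Finset.sum_range_sub (aR q) K, aR_zero]
  have hten2 : Tendsto (fun K => ∑ k ∈ Finset.range K, 2 * q * (aE q (k+1) * ag q k)) atTop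
      (𝓝 (qPochInf q (-q) * qPochInf (q^3) (q^3) / (qPochInf q q * qPochInf (q^3) (-q^3)) - 1)) := by
    apply Tendsto.congr (fun K => (heq K).symm)
    exact (tendsto_aR hq).sub_const 1
  have := tendsto_nhds_unique hten hten2
  rw [← this, tsum_mul_left]

lemma hG : q * (∑' k, ag q k)
    = 1 - qPochInf (q^3) (q^3) / (qPochInf (q^2) (q^2) * qPochInf q (-q)) := by
  have hs : Summable (fun k => q * ag q k) := (summable_ag hq).mul_left _
  have hten := hs.hasSum.tendsto_sum_nat
  have heq : ∀ K, ∑ k ∈ Finset.range K, q * ag q k = 1 - aQ q K := by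
    intro K
    rw [Finset.sum_congr rfl (fun k _ => L3 hq k), Finset.sum_range_sub' (aQ q) K, aQ_zero]
  have hten2 : Tendsto (fun K => ∑ k ∈ Finset.range K, q * ag q k) atTop
      (𝓝 (1 - qPochInf (q^3) (q^3) / (qPochInf (q^2) (q^2) * qPochInf q (-q)))) := by
    apply Tendsto.congr (fun K => (heq K).symm)
    exact (tendsto_const_nhds).sub (tendsto_aQ hq)
  have := tendsto_nhds_unique hten hten2
  rw [← this, tsum_mul_left]

end analytic
end DS2aux

/- The double sum is over `m ≥ 1, n ≥ 0`, encoded by `m = p.1 + 1`, `n = p.2`. -/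
open Filter Topology DS2aux in
theorem thmDS2_a (q : ℂ) (hq : ‖q‖ < 1) :
    ∑' p : ℕ × ℕ,
      q ^ (2 * (p.1 + 1) + p.2) * qPoch q (-q) (p.1 + 1) * (qPoch q (-q) p.1) ^ 2 *
        qPoch (q ^ 3) (q ^ 3) (p.1 + p.2) /
      (qPoch (q ^ 3) (-q ^ 3) (p.1 + 1) * qPoch q q (p.1 + p.2) *
        (qPoch q (-q) (p.1 + 1 + p.2)) ^ 2)
    = (1 / 6) * (qPochInf q (-q) * qPochInf (q ^ 3) (q ^ 3)) /
          (qPochInf q q * qPochInf (q ^ 3) (-q ^ 3))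
      + (1 / 3) * qPochInf (q ^ 3) (q ^ 3) / (qPochInf q (-q) * qPochInf (q ^ 2) (q ^ 2))
      - 1 / 2 := by
  have hq' : ‖q‖ < 1 := hq
  have h0 : (0:ℝ) ≤ ‖q‖ := norm_nonneg q
  have hc := cc_pos (q := q)
  have hC := CC_pos (q := q)
  set KD : ℝ := 3 * (CC q)^3 / cc q with hKD
  set Kg : ℝ := CC q / (cc q)^3 with hKg
  have hKD0 : 0 ≤ KD := div_nonneg (mul_nonneg (by norm_num) (pow_nonneg hC.le 3)) hc.le
  have hKg0 : 0 ≤ Kg := div_nonneg hC.le (pow_nonneg hc.le 3)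
  have Sg : Summable (ag q) := summable_ag hq'
  set G0 : ℂ := ∑' k, ag q k with hG0
  set V : ℂ := ∑' k, aE q (k+1) * ag q k with hVdef
  set EInf : ℂ := qPochInf q (-q) ^ 3 / qPochInf (q^3) (-q^3) with hEInf
  have hFeq : ∀ p : ℕ × ℕ,
      q ^ (2 * (p.1 + 1) + p.2) * qPoch q (-q) (p.1 + 1) * (qPoch q (-q) p.1) ^ 2 *
        qPoch (q ^ 3) (q ^ 3) (p.1 + p.2) /
      (qPoch (q ^ 3) (-q ^ 3) (p.1 + 1) * qPoch q q (p.1 + p.2) *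
        (qPoch q (-q) (p.1 + 1 + p.2)) ^ 2)
      = (q/3) * ((aE q (p.1+1) - aE q p.1) * ag q (p.1+p.2)) := fun p => L1 hq' p.1 p.2
  -- summability of the double sum
  have SF : Summable (fun p : ℕ×ℕ => (q/3) * ((aE q (p.1+1) - aE q p.1) * ag q (p.1+p.2))) := by
    apply Summable.of_norm
    apply Summable.of_nonneg_of_le (fun p => norm_nonneg _)
      (f := fun p : ℕ×ℕ => (KD * Kg) * (‖q‖^p.1 * ‖q‖^p.2))
    · intro p
      have e1 : ‖q/3‖ ≤ 1 := by
        rw [norm_div]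
        have : ‖(3:ℂ)‖ = 3 := by norm_num
        rw [this]
        rw [div_le_one (by norm_num)]
        linarith
      calc ‖(q/3) * ((aE q (p.1+1) - aE q p.1) * ag q (p.1+p.2))‖
          = ‖q/3‖ * (‖aE q (p.1+1) - aE q p.1‖ * ‖ag q (p.1+p.2)‖) := by
            rw [norm_mul, norm_mul]
        _ ≤ 1 * ((KD * ‖q‖^(p.1+1)) * (Kg * ‖q‖^(p.1+p.2))) := by
            apply mul_le_mul e1 _ (mul_nonneg (norm_nonneg _) (norm_nonneg _)) zero_le_one
            apply mul_le_mul (norm_dE_le hq' p.1) (norm_ag_le hq' _) (norm_nonneg _)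
              (mul_nonneg hKD0 (pow_nonneg h0 _))
        _ ≤ (KD * Kg) * (‖q‖^p.1 * ‖q‖^p.2) := by
            rw [one_mul]
            calc KD * ‖q‖^(p.1+1) * (Kg * ‖q‖^(p.1+p.2))
                = (KD * Kg) * ((‖q‖^p.1 * ‖q‖^p.2) * ‖q‖^(p.1+1)) := by ring
              _ ≤ (KD * Kg) * ((‖q‖^p.1 * ‖q‖^p.2) * 1) := by
                  apply mul_le_mul_of_nonneg_left _ (mul_nonneg hKD0 hKg0)
                  apply mul_le_mul_of_nonneg_left (pow_le_one₀ h0 hq'.le)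
                    (mul_nonneg (pow_nonneg h0 _) (pow_nonneg h0 _))
              _ = (KD * Kg) * (‖q‖^p.1 * ‖q‖^p.2) := by ring
    · exact Summable.mul_left _
        ((summable_geometric_of_lt_one h0 hq').mul_of_nonneg
          (summable_geometric_of_lt_one h0 hq')
          (fun n => pow_nonneg h0 n) (fun n => pow_nonneg h0 n))
  -- inner sums
  have hinner : ∀ mm : ℕ, ∑' n, (q/3) * ((aE q (mm+1) - aE q mm) * ag q (mm+n))
      = (q/3) * ((aE q (mm+1) - aE q mm) * (G0 - ∑ k ∈ Finset.range mm, ag q k)) := by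
    intro mm
    have t1 : ∑' n, ag q (mm+n) = G0 - ∑ k ∈ Finset.range mm, ag q k := by
      have h := Summable.sum_add_tsum_nat_add (f := ag q) mm Sg
      have h2 : ∑' n, ag q (mm+n) = ∑' n, ag q (n+mm) :=
        tsum_congr (fun n => by rw [Nat.add_comm])
      rw [h2]
      linear_combination h
    calc ∑' n, (q/3) * ((aE q (mm+1) - aE q mm) * ag q (mm+n))
        = ∑' n, ((q/3) * (aE q (mm+1) - aE q mm)) * ag q (mm+n) :=
          tsum_congr (fun n => by ring)
      _ = ((q/3) * (aE q (mm+1) - aE q mm)) * ∑' n, ag q (mm+n) := tsum_mul_left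
      _ = (q/3) * ((aE q (mm+1) - aE q mm) * (G0 - ∑ k ∈ Finset.range mm, ag q k)) := by
          rw [t1]; ring
  -- summability of the outer series
  have hMG : ∀ mm : ℕ, ‖G0 - ∑ k ∈ Finset.range mm, ag q k‖ ≤ ‖G0‖ + Kg * (1 - ‖q‖)⁻¹ := by
    intro mm
    have hpg : ‖∑ k ∈ Finset.range mm, ag q k‖ ≤ Kg * (1 - ‖q‖)⁻¹ := by
      calc ‖∑ k ∈ Finset.range mm, ag q k‖ ≤ ∑ k ∈ Finset.range mm, ‖ag q k‖ :=
            norm_sum_le _ _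
        _ ≤ ∑ k ∈ Finset.range mm, Kg * ‖q‖^k :=
            Finset.sum_le_sum (fun k _ => norm_ag_le hq' k)
        _ = Kg * ∑ k ∈ Finset.range mm, ‖q‖^k := by rw [Finset.mul_sum]
        _ ≤ Kg * (1 - ‖q‖)⁻¹ := by
            apply mul_le_mul_of_nonneg_left _ hKg0
            calc ∑ k ∈ Finset.range mm, ‖q‖^k ≤ ∑' k : ℕ, ‖q‖^k :=
                  (summable_geometric_of_lt_one h0 hq').sum_le_tsum _ (fun k _ => pow_nonneg h0 k)
              _ = (1 - ‖q‖)⁻¹ := tsum_geometric_of_lt_one h0 hq'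
    calc ‖G0 - ∑ k ∈ Finset.range mm, ag q k‖
        ≤ ‖G0‖ + ‖∑ k ∈ Finset.range mm, ag q k‖ := norm_sub_le _ _
      _ ≤ ‖G0‖ + Kg * (1 - ‖q‖)⁻¹ := by linarith
  have hMG0 : 0 ≤ ‖G0‖ + Kg * (1 - ‖q‖)⁻¹ :=
    add_nonneg (norm_nonneg _) (mul_nonneg hKg0 (inv_nonneg.mpr (by linarith)))
  have Su : Summable (fun mm => (aE q (mm+1) - aE q mm) * (G0 - ∑ k ∈ Finset.range mm, ag q k)) := by
    apply summable_geom_bound hq' _ (KD * (‖G0‖ + Kg * (1 - ‖q‖)⁻¹))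
    intro mm
    calc ‖(aE q (mm+1) - aE q mm) * (G0 - ∑ k ∈ Finset.range mm, ag q k)‖
        = ‖aE q (mm+1) - aE q mm‖ * ‖G0 - ∑ k ∈ Finset.range mm, ag q k‖ := norm_mul _ _
      _ ≤ (KD * ‖q‖^(mm+1)) * (‖G0‖ + Kg * (1 - ‖q‖)⁻¹) :=
          mul_le_mul (norm_dE_le hq' mm) (hMG mm) (norm_nonneg _)
            (mul_nonneg hKD0 (pow_nonneg h0 _))
      _ = (KD * (‖G0‖ + Kg * (1 - ‖q‖)⁻¹)) * ‖q‖^(mm+1) := by ring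
      _ ≤ (KD * (‖G0‖ + Kg * (1 - ‖q‖)⁻¹)) * ‖q‖^mm := by
          apply mul_le_mul_of_nonneg_left _ (mul_nonneg hKD0 hMG0)
          exact pow_le_pow_of_le_one h0 hq'.le (by omega)
  -- value of the outer series (Abel summation)
  have val : ∑' mm, (aE q (mm+1) - aE q mm) * (G0 - ∑ k ∈ Finset.range mm, ag q k)
      = G0 * EInf - G0 - EInf * G0 + V := by
    have T1 : Tendsto (fun M => G0 * aE q M - G0 - aE q M * (∑ k ∈ Finset.range M, ag q k)
        + ∑ i ∈ Finset.range M, aE q (i+1) * ag q i) atTop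
        (𝓝 (G0 * EInf - G0 - EInf * G0 + V)) := by
      exact ((((tendsto_aE hq').const_mul G0).sub_const G0).sub
        ((tendsto_aE hq').mul Sg.hasSum.tendsto_sum_nat)).add
        (summable_V hq').hasSum.tendsto_sum_nat
    have T2 := Su.hasSum.tendsto_sum_nat
    have T2' : Tendsto (fun M => ∑ i ∈ Finset.range M,
        (aE q (i+1) - aE q i) * (G0 - ∑ k ∈ Finset.range i, ag q k)) atTop
        (𝓝 (G0 * EInf - G0 - EInf * G0 + V)) := by
      apply Tendsto.congr (fun M => (DS2aux.abel (aE q) (ag q) G0 aE_zero M).symm) T1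
    exact tendsto_nhds_unique T2 T2'
  have hVeq := hV hq'
  have hGeq := hG hq'
  calc ∑' p : ℕ × ℕ,
      q ^ (2 * (p.1 + 1) + p.2) * qPoch q (-q) (p.1 + 1) * (qPoch q (-q) p.1) ^ 2 *
        qPoch (q ^ 3) (q ^ 3) (p.1 + p.2) /
      (qPoch (q ^ 3) (-q ^ 3) (p.1 + 1) * qPoch q q (p.1 + p.2) *
        (qPoch q (-q) (p.1 + 1 + p.2)) ^ 2)
      = ∑' p : ℕ×ℕ, (q/3) * ((aE q (p.1+1) - aE q p.1) * ag q (p.1+p.2)) := tsum_congr hFeq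
    _ = ∑' mm, ∑' n, (q/3) * ((aE q (mm+1) - aE q mm) * ag q (mm+n)) :=
        Summable.tsum_prod' SF (fun b => SF.prod_factor b)
    _ = ∑' mm, (q/3) * ((aE q (mm+1) - aE q mm) * (G0 - ∑ k ∈ Finset.range mm, ag q k)) :=
        tsum_congr hinner
    _ = (q/3) * ∑' mm, (aE q (mm+1) - aE q mm) * (G0 - ∑ k ∈ Finset.range mm, ag q k) :=
        tsum_mul_left
    _ = (q/3) * (G0 * EInf - G0 - EInf * G0 + V) := by rw [val]
    _ = (1 / 6) * (qPochInf q (-q) * qPochInf (q ^ 3) (q ^ 3)) /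
          (qPochInf q q * qPochInf (q ^ 3) (-q ^ 3))
      + (1 / 3) * qPochInf (q ^ 3) (q ^ 3) / (qPochInf q (-q) * qPochInf (q ^ 2) (q ^ 2))
      - 1 / 2 := by
        linear_combination (1/6 : ℂ) * hVeq - (1/3 : ℂ) * hGeq
end

section
/- For every complex number q with |q| < 1 (with values of q making any denominator factor 1 + q^j vanish excluded), ∑_{m≥1, n≥0} q^{2m+n} (q; q)_m (−q; q)_{m−1}^2 (−q^3; q^3)_{m+n−1} / [ (q^3; q^3)_m (−q; q)_{m+n−1} (−q; q)_{m+n}^2 ] = −(1/2)·(q; q)_∞ (−q^3; q^3)_∞ / [ (−q; q)_∞ (q^3; q^3)_∞ ] + (1/3)·(−q^3; q^3)_∞ / (−q; q)_∞^3 + 1/6. -/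
open Finset Filter Topology

namespace ThmDS2bAux

/-! Factor families -/

noncomputable def fE (q : ℂ) (j : ℕ) : ℂ := 1 - q ^ (j + 1)
noncomputable def fQ (q : ℂ) (j : ℕ) : ℂ := 1 + q ^ (j + 1)
noncomputable def fP (q : ℂ) (j : ℕ) : ℂ := 1 - q ^ (j + 1) + q ^ (j + 1) * q ^ (j + 1)
noncomputable def fC (q : ℂ) (j : ℕ) : ℂ := 1 + q ^ (j + 1) + q ^ (j + 1) * q ^ (j + 1)

noncomputable def Eb (q : ℂ) (n : ℕ) : ℂ := ∏ j ∈ range n, fE q j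
noncomputable def Qb (q : ℂ) (n : ℕ) : ℂ := ∏ j ∈ range n, fQ q j
noncomputable def Pb (q : ℂ) (n : ℕ) : ℂ := ∏ j ∈ range n, fP q j
noncomputable def Cb (q : ℂ) (n : ℕ) : ℂ := ∏ j ∈ range n, fC q j

noncomputable def EI (q : ℂ) : ℂ := ∏' j : ℕ, fE q j
noncomputable def QI (q : ℂ) : ℂ := ∏' j : ℕ, fQ q j
noncomputable def PI (q : ℂ) : ℂ := ∏' j : ℕ, fP q j
noncomputable def CI (q : ℂ) : ℂ := ∏' j : ℕ, fC q j

/-- general lemma on infinite products -/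
lemma good_prod (F : ℕ → ℂ) (hne : ∀ j, F j ≠ 0)
    (hsum : Summable fun j => ‖F j - 1‖) :
    Multipliable F ∧ (∏' j, F j) ≠ 0 ∧
      Tendsto (fun n => ∏ j ∈ range n, F j) atTop (𝓝 (∏' j, F j)) := by
  have hlog : Summable fun j => Complex.log (F j) := by
    have h0 : Tendsto (fun j => ‖F j - 1‖) atTop (𝓝 0) := hsum.tendsto_atTop_zero
    have hev : ∀ᶠ j in atTop, ‖F j - 1‖ ≤ 1 / 2 :=
      h0.eventually_le_const (by norm_num : (0:ℝ) < 1 / 2)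
    apply Summable.of_norm_bounded_eventually_nat (g := fun j => 3 / 2 * ‖F j - 1‖)
      (hsum.mul_left _)
    filter_upwards [hev] with j hj
    have h1 : (1 : ℂ) + (F j - 1) = F j := by ring
    calc ‖Complex.log (F j)‖ = ‖Complex.log (1 + (F j - 1))‖ := by rw [h1]
      _ ≤ 3 / 2 * ‖F j - 1‖ := Complex.norm_log_one_add_half_le_self hj
  have hm : Multipliable F :=
    Complex.multipliable_of_summable_log hlog
  have h2 := Complex.cexp_tsum_eq_tprod hne hlog
  refine ⟨hm, ?_, hm.hasProd.tendsto_prod_nat⟩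
  rw [← h2]
  exact Complex.exp_ne_zero _

section Fixedq

variable {q : ℂ}

lemma hqpow (hq : ‖q‖ < 1) (j : ℕ) : ‖q ^ (j + 1)‖ < 1 := by
  rw [norm_pow]
  exact pow_lt_one₀ (norm_nonneg q) hq (Nat.succ_ne_zero j)

lemma hgeo (hq : ‖q‖ < 1) : Summable (fun j : ℕ => ‖q‖ ^ (j + 1)) :=
  (summable_nat_add_iff 1).2 (summable_geometric_of_lt_one (norm_nonneg q) hq)

lemma fE_ne (hq : ‖q‖ < 1) (j : ℕ) : fE q j ≠ 0 := by
  intro h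
  have h1 : q ^ (j + 1) = 1 := by unfold fE at h; linear_combination -h
  have h2 := hqpow hq j
  rw [h1] at h2; simp at h2

lemma fQ_ne (hq : ‖q‖ < 1) (j : ℕ) : fQ q j ≠ 0 := by
  intro h
  have h1 : q ^ (j + 1) = -1 := by unfold fQ at h; linear_combination h
  have h2 := hqpow hq j
  rw [h1] at h2; simp at h2

lemma fP_ne (hq : ‖q‖ < 1) (j : ℕ) : fP q j ≠ 0 := by
  intro h
  have h1 : (q ^ (j + 1)) ^ 3 = -1 := by
    unfold fP at h; linear_combination (q ^ (j + 1) + 1) * h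
  have h2 : ‖(q ^ (j + 1)) ^ 3‖ < 1 := by
    rw [norm_pow]
    exact pow_lt_one₀ (norm_nonneg _) (hqpow hq j) three_ne_zero
  rw [h1] at h2; simp at h2

lemma fC_ne (hq : ‖q‖ < 1) (j : ℕ) : fC q j ≠ 0 := by
  intro h
  have h1 : (q ^ (j + 1)) ^ 3 = 1 := by
    unfold fC at h; linear_combination (q ^ (j + 1) - 1) * h
  have h2 : ‖(q ^ (j + 1)) ^ 3‖ < 1 := by
    rw [norm_pow]
    exact pow_lt_one₀ (norm_nonneg _) (hqpow hq j) three_ne_zero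
  rw [h1] at h2; simp at h2

lemma Eb_ne (hq : ‖q‖ < 1) (n : ℕ) : Eb q n ≠ 0 :=
  Finset.prod_ne_zero_iff.mpr fun j _ => fE_ne hq j

lemma Qb_ne (hq : ‖q‖ < 1) (n : ℕ) : Qb q n ≠ 0 :=
  Finset.prod_ne_zero_iff.mpr fun j _ => fQ_ne hq j

lemma Cb_ne (hq : ‖q‖ < 1) (n : ℕ) : Cb q n ≠ 0 :=
  Finset.prod_ne_zero_iff.mpr fun j _ => fC_ne hq j

lemma E_good (hq : ‖q‖ < 1) : Multipliable (fE q) ∧ EI q ≠ 0 ∧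
    Tendsto (fun n => Eb q n) atTop (𝓝 (EI q)) := by
  apply good_prod (fE q) (fE_ne hq)
  apply (hgeo hq).congr
  intro j
  have h : fE q j - 1 = -(q ^ (j + 1)) := by unfold fE; ring
  rw [h, norm_neg, norm_pow]

lemma Q_good (hq : ‖q‖ < 1) : Multipliable (fQ q) ∧ QI q ≠ 0 ∧
    Tendsto (fun n => Qb q n) atTop (𝓝 (QI q)) := by
  apply good_prod (fQ q) (fQ_ne hq)
  apply (hgeo hq).congr
  intro j
  have h : fQ q j - 1 = q ^ (j + 1) := by unfold fQ; ring
  rw [h, norm_pow]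

lemma two_term_bound (hq : ‖q‖ < 1) (z : ℂ) (j : ℕ) (h : z = -(q ^ (j + 1)) + q ^ (j + 1) * q ^ (j + 1) ∨ z = q ^ (j + 1) + q ^ (j + 1) * q ^ (j + 1)) :
    ‖z‖ ≤ 2 * ‖q‖ ^ (j + 1) := by
  have hb : ‖q ^ (j + 1)‖ ≤ ‖q‖ ^ (j + 1) := by rw [norm_pow]
  have hlt : ‖q‖ ^ (j + 1) < 1 := by rw [← norm_pow]; exact hqpow hq j
  have h1 : ‖q ^ (j + 1) * q ^ (j + 1)‖ ≤ ‖q‖ ^ (j + 1) := by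
    rw [norm_mul, norm_pow]
    nlinarith [pow_nonneg (norm_nonneg q) (j + 1)]
  rcases h with h | h <;> rw [h] <;>
    calc ‖_ + q ^ (j + 1) * q ^ (j + 1)‖ ≤ ‖q‖ ^ (j + 1) + ‖q‖ ^ (j + 1) := by
          refine (norm_add_le _ _).trans (add_le_add ?_ h1)
          first
          | (rw [norm_neg]; exact hb)
          | exact hb
      _ = 2 * ‖q‖ ^ (j + 1) := by ring

lemma P_good (hq : ‖q‖ < 1) : Multipliable (fP q) ∧ PI q ≠ 0 ∧
    Tendsto (fun n => Pb q n) atTop (𝓝 (PI q)) := by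
  apply good_prod (fP q) (fP_ne hq)
  apply Summable.of_nonneg_of_le (fun j => norm_nonneg _)
    (fun j => two_term_bound hq _ j (Or.inl (by unfold fP; ring)))
    ((hgeo hq).mul_left 2)

lemma C_good (hq : ‖q‖ < 1) : Multipliable (fC q) ∧ CI q ≠ 0 ∧
    Tendsto (fun n => Cb q n) atTop (𝓝 (CI q)) := by
  apply good_prod (fC q) (fC_ne hq)
  apply Summable.of_nonneg_of_le (fun j => norm_nonneg _)
    (fun j => two_term_bound hq _ j (Or.inr (by unfold fC; ring)))
    ((hgeo hq).mul_left 2)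

/-! qPoch rewrites -/

lemma cube_pow (j : ℕ) : (q ^ 3) ^ j = (q ^ j) ^ 3 := by
  rw [← pow_mul, mul_comm, pow_mul]

lemma qPoch_E (n : ℕ) : qPoch q q n = Eb q n := by
  unfold qPoch Eb fE
  exact Finset.prod_congr rfl fun j _ => by rw [pow_succ]; ring

lemma qPoch_Q (n : ℕ) : qPoch q (-q) n = Qb q n := by
  unfold qPoch Qb fQ
  exact Finset.prod_congr rfl fun j _ => by rw [pow_succ]; ring

lemma qPoch3_neg (n : ℕ) : qPoch (q ^ 3) (-q ^ 3) n = Qb q n * Pb q n := by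
  unfold qPoch Qb Pb
  rw [← Finset.prod_mul_distrib]
  refine Finset.prod_congr rfl fun j _ => ?_
  unfold fQ fP
  rw [cube_pow, pow_succ]
  ring

lemma qPoch3_pos (n : ℕ) : qPoch (q ^ 3) (q ^ 3) n = Eb q n * Cb q n := by
  unfold qPoch Eb Cb
  rw [← Finset.prod_mul_distrib]
  refine Finset.prod_congr rfl fun j _ => ?_
  unfold fE fC
  rw [cube_pow, pow_succ]
  ring

lemma qPochInf_E : qPochInf q q = EI q := by
  unfold qPochInf EI fE
  exact tprod_congr fun j => by rw [pow_succ]; ring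

lemma qPochInf_Q : qPochInf q (-q) = QI q := by
  unfold qPochInf QI fQ
  exact tprod_congr fun j => by rw [pow_succ]; ring

lemma qPochInf3_neg (hq : ‖q‖ < 1) : qPochInf (q ^ 3) (-q ^ 3) = QI q * PI q := by
  unfold qPochInf
  have h1 : (fun j : ℕ => 1 - -q ^ 3 * (q ^ 3) ^ j) = fun j => fQ q j * fP q j := by
    funext j
    unfold fQ fP
    rw [cube_pow, pow_succ]
    ring
  rw [h1, Multipliable.tprod_mul (Q_good hq).1 (P_good hq).1]
  rfl

lemma qPochInf3_pos (hq : ‖q‖ < 1) : qPochInf (q ^ 3) (q ^ 3) = EI q * CI q := by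
  unfold qPochInf
  have h1 : (fun j : ℕ => 1 - q ^ 3 * (q ^ 3) ^ j) = fun j => fE q j * fC q j := by
    funext j
    unfold fE fC
    rw [cube_pow, pow_succ]
    ring
  rw [h1, Multipliable.tprod_mul (E_good hq).1 (C_good hq).1]
  rfl

/-! The summand and telescoping functions -/

noncomputable def sFun (q : ℂ) (p : ℕ × ℕ) : ℂ :=
  q ^ (2 * (p.1 + 1) + p.2) * qPoch q q (p.1 + 1) * (qPoch q (-q) p.1) ^ 2 *
        qPoch (q ^ 3) (-q ^ 3) (p.1 + p.2) /
      (qPoch (q ^ 3) (q ^ 3) (p.1 + 1) * qPoch q (-q) (p.1 + p.2) *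
        (qPoch q (-q) (p.1 + 1 + p.2)) ^ 2)

noncomputable def sVal (q : ℂ) (a b : ℕ) : ℂ :=
  q ^ (2 * a + b + 2) * Qb q a ^ 2 * Pb q (a + b) * (Cb q (a + 1))⁻¹ *
    ((Qb q (a + b + 1))⁻¹) ^ 2

noncomputable def Hf (q : ℂ) (a b : ℕ) : ℂ :=
  q ^ (a + 1) * Qb q a ^ 2 * Pb q (a + b) / (3 * Cb q (a + 1) * Qb q (a + b) ^ 2)

noncomputable def Vf (q : ℂ) (a : ℕ) : ℂ :=
  Hf q a 0 - q ^ (a + 1) * Qb q a ^ 2 * PI q / (3 * Cb q (a + 1) * QI q ^ 2)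

noncomputable def Wf (q : ℂ) (a : ℕ) : ℂ :=
  Pb q a / (6 * Cb q a) + PI q * Qb q a ^ 2 / (3 * QI q ^ 2 * Cb q a)


lemma alg0 (X E Qa Qab Pab C Qab1 : ℂ) (hE : E ≠ 0) (hQab : Qab ≠ 0) (hC : C ≠ 0)
    (hQab1 : Qab1 ≠ 0) :
    X * E * Qa ^ 2 * (Qab * Pab) / (E * C * Qab * Qab1 ^ 2)
      = X * Qa ^ 2 * Pab * C⁻¹ * (Qab1⁻¹) ^ 2 := by
  have e : X * Qa ^ 2 * Pab * C⁻¹ * (Qab1⁻¹) ^ 2 = X * Qa ^ 2 * Pab / (C * Qab1 ^ 2) := by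
    ring
  rw [e, div_eq_div_iff (by simp [hE, hC, hQab, hQab1]) (by simp [hC, hQab1])]
  ring

lemma alg1 (X y z Pab Qab Ca1 Qa f p : ℂ) (hX : X = y * z) (hQab : Qab ≠ 0) (hCa1 : Ca1 ≠ 0)
    (hf : f ≠ 0) (h3 : f = 1 + z) (h2 : p = 1 - z + z * z) :
    X * Qa ^ 2 * Pab * Ca1⁻¹ * ((Qab * f)⁻¹) ^ 2
      = y * Qa ^ 2 * Pab / (3 * Ca1 * Qab ^ 2) -
        y * Qa ^ 2 * (Pab * p) / (3 * Ca1 * (Qab * f) ^ 2) := by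
  have e1 : X * Qa ^ 2 * Pab * Ca1⁻¹ * ((Qab * f)⁻¹) ^ 2
      = (X * Qa ^ 2 * Pab) / (Ca1 * (Qab * f) ^ 2) := by ring
  rw [e1, div_sub_div _ _ (by simp [hCa1, hQab] : (3:ℂ) * Ca1 * Qab ^ 2 ≠ 0)
    (by simp [hCa1, hQab, hf] : (3:ℂ) * Ca1 * (Qab * f) ^ 2 ≠ 0),
    div_eq_div_iff (by simp [hCa1, hQab, hf] : Ca1 * (Qab * f) ^ 2 ≠ 0)
    (by simp [hCa1, hQab, hf] : (3:ℂ) * Ca1 * Qab ^ 2 * ((3:ℂ) * Ca1 * (Qab * f) ^ 2) ≠ 0)]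
  subst hX h3 h2
  ring

lemma alg4 (z Pa Qa Ca PIv QIv c p f : ℂ) (hQ : Qa ≠ 0) (hC : Ca ≠ 0) (hQI : QIv ≠ 0)
    (hc : c ≠ 0) (h1 : c = 1 + z + z * z) (h2 : p = 1 - z + z * z) (h3 : f = 1 + z) :
    z * Qa ^ 2 * Pa / (3 * (Ca * c) * Qa ^ 2) - z * Qa ^ 2 * PIv / (3 * (Ca * c) * QIv ^ 2)
      = (Pa / (6 * Ca) + PIv * Qa ^ 2 / (3 * QIv ^ 2 * Ca)) -
        (Pa * p / (6 * (Ca * c)) + PIv * (Qa * f) ^ 2 / (3 * QIv ^ 2 * (Ca * c))) := by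
  rw [div_sub_div _ _ (by simp [hQ, hC, hc] : (3:ℂ) * (Ca * c) * Qa ^ 2 ≠ 0)
    (by simp [hQI, hC, hc] : (3:ℂ) * (Ca * c) * QIv ^ 2 ≠ 0)]
  rw [div_add_div _ _ (by simp [hC] : (6:ℂ) * Ca ≠ 0)
    (by simp [hQI, hC] : (3:ℂ) * QIv ^ 2 * Ca ≠ 0)]
  rw [div_add_div _ _ (by simp [hC, hc] : (6:ℂ) * (Ca * c) ≠ 0)
    (by simp [hQI, hC, hc] : (3:ℂ) * QIv ^ 2 * (Ca * c) ≠ 0)]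
  rw [div_sub_div _ _ (by simp [hQI, hC, hQ] : (6:ℂ) * Ca * ((3:ℂ) * QIv ^ 2 * Ca) ≠ 0)
    (by simp [hQI, hC, hc] : (6:ℂ) * (Ca * c) * ((3:ℂ) * QIv ^ 2 * (Ca * c)) ≠ 0)]
  rw [div_eq_div_iff
    (by simp [hQI, hC, hc, hQ] : (3:ℂ) * (Ca * c) * Qa ^ 2 * ((3:ℂ) * (Ca * c) * QIv ^ 2) ≠ 0)
    (by simp [hQI, hC, hc, hQ] :
      (6:ℂ) * Ca * ((3:ℂ) * QIv ^ 2 * Ca) * ((6:ℂ) * (Ca * c) * ((3:ℂ) * QIv ^ 2 * (Ca * c))) ≠ 0)]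
  subst h1 h2 h3
  ring

lemma L0 (hq : ‖q‖ < 1) (a b : ℕ) : sFun q (a, b) = sVal q a b := by
  unfold sFun sVal
  simp only
  rw [qPoch3_neg, qPoch3_pos, qPoch_E, qPoch_Q, qPoch_Q]
  have e : a + 1 + b = a + b + 1 := by omega
  rw [e, qPoch_Q]
  rw [show 2 * (a + 1) + b = 2 * a + b + 2 from by omega]
  exact alg0 _ _ _ _ _ _ _ (Eb_ne hq (a + 1)) (Qb_ne hq (a + b)) (Cb_ne hq (a + 1))
    (Qb_ne hq (a + b + 1))

lemma L1 (hq : ‖q‖ < 1) (a b : ℕ) : sVal q a b = Hf q a b - Hf q a (b + 1) := by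
  unfold sVal Hf
  have e1 : a + (b + 1) = a + b + 1 := by omega
  rw [e1]
  have hP1 : Pb q (a + b + 1) = Pb q (a + b) * fP q (a + b) := Finset.prod_range_succ _ _
  have hQ1 : Qb q (a + b + 1) = Qb q (a + b) * fQ q (a + b) := Finset.prod_range_succ _ _
  rw [hP1, hQ1]
  exact alg1 _ _ _ _ _ _ _ _ _
    (by rw [← pow_add]; congr 1; omega)
    (Qb_ne hq (a + b)) (Cb_ne hq (a + 1)) (fQ_ne hq (a + b)) rfl rfl

lemma bdd_of_tendsto {f : ℕ → ℂ} {L : ℂ} (h : Tendsto f atTop (𝓝 L)) :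
    ∃ M : ℝ, 0 ≤ M ∧ ∀ n, ‖f n‖ ≤ M := by
  obtain ⟨M, hM⟩ := h.norm.bddAbove_range
  exact ⟨M, le_trans (norm_nonneg (f 0)) (hM ⟨0, rfl⟩), fun n => hM ⟨n, rfl⟩⟩

lemma L2 (hq : ‖q‖ < 1) : Summable (sFun q) := by
  obtain ⟨MQ, hMQ0, hMQ⟩ := bdd_of_tendsto (Q_good hq).2.2
  obtain ⟨MP, hMP0, hMP⟩ := bdd_of_tendsto (P_good hq).2.2
  obtain ⟨MC, hMC0, hMC⟩ := bdd_of_tendsto ((C_good hq).2.2.inv₀ (C_good hq).2.1)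
  obtain ⟨MQi, hMQi0, hMQi⟩ := bdd_of_tendsto ((Q_good hq).2.2.inv₀ (Q_good hq).2.1)
  apply Summable.of_norm_bounded
    (g := fun p : ℕ × ℕ => MQ ^ 2 * MP * MC * MQi ^ 2 * (‖q‖ ^ p.1 * ‖q‖ ^ p.2))
  · exact ((summable_geometric_of_lt_one (norm_nonneg q) hq).mul_of_nonneg
      (summable_geometric_of_lt_one (norm_nonneg q) hq)
      (fun n => pow_nonneg (norm_nonneg q) n)
      (fun n => pow_nonneg (norm_nonneg q) n)).mul_left _
  · rintro ⟨a, b⟩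
    rw [L0 hq a b]
    unfold sVal
    have hnorm : ‖q ^ (2 * a + b + 2) * Qb q a ^ 2 * Pb q (a + b) * (Cb q (a + 1))⁻¹ *
        ((Qb q (a + b + 1))⁻¹) ^ 2‖ =
        ‖q‖ ^ (2 * a + b + 2) * ‖Qb q a‖ ^ 2 * ‖Pb q (a + b)‖ * ‖(Cb q (a + 1))⁻¹‖ *
          ‖(Qb q (a + b + 1))⁻¹‖ ^ 2 := by
      simp [norm_mul, norm_pow]
    rw [hnorm]
    have step1 : ‖q‖ ^ (2 * a + b + 2) * ‖Qb q a‖ ^ 2 * ‖Pb q (a + b)‖ *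
        ‖(Cb q (a + 1))⁻¹‖ * ‖(Qb q (a + b + 1))⁻¹‖ ^ 2 ≤
        ‖q‖ ^ (2 * a + b + 2) * MQ ^ 2 * MP * MC * MQi ^ 2 := by
      gcongr
      · exact hMQ a
      · exact hMP (a + b)
      · exact hMC (a + 1)
      · exact hMQi (a + b + 1)
    refine step1.trans ?_
    have step2 : ‖q‖ ^ (2 * a + b + 2) ≤ ‖q‖ ^ (a + b) :=
      pow_le_pow_of_le_one (norm_nonneg q) hq.le (by omega)
    calc ‖q‖ ^ (2 * a + b + 2) * MQ ^ 2 * MP * MC * MQi ^ 2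
        ≤ ‖q‖ ^ (a + b) * MQ ^ 2 * MP * MC * MQi ^ 2 := by
          gcongr
      _ = MQ ^ 2 * MP * MC * MQi ^ 2 * (‖q‖ ^ a * ‖q‖ ^ b) := by
          rw [pow_add]; ring

lemma L3 (hq : ‖q‖ < 1) (a : ℕ) : HasSum (fun b => sFun q (a, b)) (Vf q a) := by
  have hsa : Summable fun b => sFun q (a, b) := (L2 hq).prod_factor a
  have h1 : Tendsto (fun N => ∑ b ∈ range N, sFun q (a, b)) atTop
      (𝓝 (∑' b, sFun q (a, b))) := hsa.hasSum.tendsto_sum_nat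
  have hshift : Tendsto (fun N : ℕ => a + N) atTop atTop :=
    tendsto_atTop_mono (fun N => Nat.le_add_left N a) tendsto_id
  have hPshift : Tendsto (fun N => Pb q (a + N)) atTop (𝓝 (PI q)) :=
    (P_good hq).2.2.comp hshift
  have hQshift : Tendsto (fun N => Qb q (a + N)) atTop (𝓝 (QI q)) :=
    (Q_good hq).2.2.comp hshift
  have hden : (3 : ℂ) * Cb q (a + 1) * QI q ^ 2 ≠ 0 :=
    mul_ne_zero (mul_ne_zero three_ne_zero (Cb_ne hq (a + 1)))
      (pow_ne_zero _ (Q_good hq).2.1)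
  have h3 : Tendsto (fun N => Hf q a N) atTop
      (𝓝 (q ^ (a + 1) * Qb q a ^ 2 * PI q / (3 * Cb q (a + 1) * QI q ^ 2))) := by
    unfold Hf
    exact (tendsto_const_nhds.mul hPshift).div
      (tendsto_const_nhds.mul (hQshift.pow 2)) hden
  have h2 : Tendsto (fun N => ∑ b ∈ range N, sFun q (a, b)) atTop (𝓝 (Vf q a)) := by
    have he : ∀ N, ∑ b ∈ range N, sFun q (a, b) = Hf q a 0 - Hf q a N := by
      intro N
      rw [Finset.sum_congr rfl fun b _ => (L0 hq a b).trans (L1 hq a b)]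
      exact Finset.sum_range_sub' (fun b => Hf q a b) N
    rw [show (fun N => ∑ b ∈ range N, sFun q (a, b)) = fun N => Hf q a 0 - Hf q a N
      from funext he]
    exact tendsto_const_nhds.sub h3
  have heq : ∑' b, sFun q (a, b) = Vf q a := tendsto_nhds_unique h1 h2
  exact heq ▸ hsa.hasSum

lemma L4 (hq : ‖q‖ < 1) (a : ℕ) : Vf q a = Wf q a - Wf q (a + 1) := by
  unfold Vf Wf Hf
  have hP1 : Pb q (a + 1) = Pb q a * fP q a := Finset.prod_range_succ _ _
  have hQ1 : Qb q (a + 1) = Qb q a * fQ q a := Finset.prod_range_succ _ _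
  have hC1 : Cb q (a + 1) = Cb q a * fC q a := Finset.prod_range_succ _ _
  rw [Nat.add_zero, hP1, hQ1, hC1]
  exact alg4 _ _ _ _ _ _ _ _ _ (Qb_ne hq a) (Cb_ne hq a) (Q_good hq).2.1 (fC_ne hq a)
    rfl rfl rfl

lemma L5 (hq : ‖q‖ < 1) : Tendsto (Wf q) atTop
    (𝓝 (PI q / (6 * CI q) + PI q * QI q ^ 2 / (3 * QI q ^ 2 * CI q))) := by
  unfold Wf
  have hCI := (C_good hq).2.1
  have hQI := (Q_good hq).2.1
  exact ((P_good hq).2.2.div (tendsto_const_nhds.mul (C_good hq).2.2)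
      (mul_ne_zero (by norm_num) hCI)).add
    ((tendsto_const_nhds.mul ((Q_good hq).2.2.pow 2)).div
      (tendsto_const_nhds.mul (C_good hq).2.2)
      (mul_ne_zero (mul_ne_zero three_ne_zero (pow_ne_zero _ hQI)) hCI))


lemma algFinal (PIv QIv CIv EIv : ℂ) (hQ : QIv ≠ 0) (hC : CIv ≠ 0) (hE : EIv ≠ 0) :
    1/6 + PIv/(3*QIv^2) - (PIv/(6*CIv) + PIv*QIv^2/(3*QIv^2*CIv))
    = -(1/2) * (EIv*(QIv*PIv))/(QIv*(EIv*CIv)) + 1/3*(QIv*PIv)/QIv^3 + 1/6 := by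
  rw [div_add_div _ _ (by simp [hC] : (6:ℂ)*CIv ≠ 0) (by simp [hQ, hC] : (3:ℂ)*QIv^2*CIv ≠ 0),
    div_add_div _ _ (by norm_num : (6:ℂ) ≠ 0) (by simp [hQ] : (3:ℂ)*QIv^2 ≠ 0),
    div_sub_div _ _ (by simp [hQ] : (6:ℂ)*(3*QIv^2) ≠ 0)
      (by simp [hQ, hC] : (6:ℂ)*CIv*(3*QIv^2*CIv) ≠ 0),
    div_add_div _ _ (by simp [hQ, hE, hC] : QIv*(EIv*CIv) ≠ 0) (by simp [hQ] : QIv^3 ≠ 0),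
    div_add_div _ _ (by simp [hQ, hE, hC] : QIv*(EIv*CIv)*QIv^3 ≠ 0) (by norm_num : (6:ℂ) ≠ 0),
    div_eq_div_iff (by simp [hQ, hC] : (6:ℂ)*(3*QIv^2)*(6*CIv*(3*QIv^2*CIv)) ≠ 0)
      (by simp [hQ, hE, hC] : QIv*(EIv*CIv)*QIv^3*6 ≠ 0)]
  ring

end Fixedq

end ThmDS2bAux

open ThmDS2bAux in
/- The double sum is over `m ≥ 1, n ≥ 0`, encoded by `m = p.1 + 1`, `n = p.2`. -/
theorem thmDS2_b (q : ℂ) (hq : ‖q‖ < 1) :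
    ∑' p : ℕ × ℕ,
      q ^ (2 * (p.1 + 1) + p.2) * qPoch q q (p.1 + 1) * (qPoch q (-q) p.1) ^ 2 *
        qPoch (q ^ 3) (-q ^ 3) (p.1 + p.2) /
      (qPoch (q ^ 3) (q ^ 3) (p.1 + 1) * qPoch q (-q) (p.1 + p.2) *
        (qPoch q (-q) (p.1 + 1 + p.2)) ^ 2)
    = -(1 / 2) * (qPochInf q q * qPochInf (q ^ 3) (-q ^ 3)) /
          (qPochInf q (-q) * qPochInf (q ^ 3) (q ^ 3))
      + (1 / 3) * qPochInf (q ^ 3) (-q ^ 3) / (qPochInf q (-q)) ^ 3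
      + 1 / 6 := by
  have hq' : ‖q‖ < 1 := hq
  have hLHS : (∑' p : ℕ × ℕ,
      q ^ (2 * (p.1 + 1) + p.2) * qPoch q q (p.1 + 1) * (qPoch q (-q) p.1) ^ 2 *
        qPoch (q ^ 3) (-q ^ 3) (p.1 + p.2) /
      (qPoch (q ^ 3) (q ^ 3) (p.1 + 1) * qPoch q (-q) (p.1 + p.2) *
        (qPoch q (-q) (p.1 + 1 + p.2)) ^ 2)) = ∑' p : ℕ × ℕ, sFun q p := rfl
  rw [hLHS]
  -- total sum via fiberwise sums
  have htot : HasSum (fun a => Vf q a) (∑' p, sFun q p) :=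
    HasSum.prod_fiberwise (L2 hq').hasSum (L3 hq')
  have h1 := htot.tendsto_sum_nat
  have h2 : Tendsto (fun N => ∑ a ∈ range N, Vf q a) atTop
      (𝓝 (Wf q 0 - (PI q / (6 * CI q) + PI q * QI q ^ 2 / (3 * QI q ^ 2 * CI q)))) := by
    have he : ∀ N, ∑ a ∈ range N, Vf q a = Wf q 0 - Wf q N := by
      intro N
      rw [Finset.sum_congr rfl fun a _ => L4 hq' a]
      exact Finset.sum_range_sub' (Wf q) N
    rw [show (fun N => ∑ a ∈ range N, Vf q a) = fun N => Wf q 0 - Wf q N from funext he]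
    exact tendsto_const_nhds.sub (L5 hq')
  have hkey : ∑' p, sFun q p =
      Wf q 0 - (PI q / (6 * CI q) + PI q * QI q ^ 2 / (3 * QI q ^ 2 * CI q)) :=
    tendsto_nhds_unique h1 h2
  rw [hkey]
  -- compute Wf q 0
  have hW0 : Wf q 0 = 1 / 6 + PI q / (3 * QI q ^ 2) := by
    unfold Wf Pb Qb Cb
    simp [Finset.prod_range_zero]
  rw [hW0]
  -- rewrite RHS
  rw [qPochInf3_neg hq', qPochInf3_pos hq', qPochInf_E, qPochInf_Q]
  exact algFinal (PI q) (QI q) (CI q) (EI q) (Q_good hq').2.1 (C_good hq').2.1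
    (E_good hq').2.1
end

section
/- For every complex number q with |q| < 1 (with values of q making any denominator factor 1 + q^j vanish excluded), ∑_{m≥1, n≥0} q^{2m+n} (q^3; q^3)_{m−1} (−q; q)_m (−q; q)_{m+n−1}^2 (q; q)_{m+n} / [ (q; q)_{m−1} (−q^3; q^3)_m (q^3; q^3)_{m+n} ] = (1/6)·(−q; q)_∞^3 / (−q^3; q^3)_∞ − (1/2)·(−q; q)_∞ (q^2; q^2)_∞ / (q^3; q^3)_∞ + 1/3. -/
open Finset Filter Topology


/- The double sum is over `m ≥ 1, n ≥ 0`, encoded by `m = p.1 + 1`, `n = p.2`. -/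
lemma qPoch_zero (q a : ℂ) : qPoch q a 0 = 1 := Finset.prod_range_zero _

lemma qPoch_succ (q a : ℂ) (n : ℕ) :
    qPoch q a (n+1) = qPoch q a n * (1 - a * q ^ n) := Finset.prod_range_succ _ _

lemma factor_ne_zero {Q a : ℂ} (hQ : ‖Q‖ ≤ 1) (ha : ‖a‖ < 1) (j : ℕ) :
    1 - a * Q ^ j ≠ 0 := by
  intro h
  have h1 : a * Q ^ j = 1 := by linear_combination -h
  have : ‖a * Q ^ j‖ < 1 := by
    rw [norm_mul, norm_pow]
    calc ‖a‖ * ‖Q‖ ^ j ≤ ‖a‖ * 1 := by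
          apply mul_le_mul_of_nonneg_left _ (norm_nonneg a)
          exact pow_le_one₀ (norm_nonneg Q) hQ
      _ < 1 := by simpa using ha
  rw [h1] at this; simp at this

lemma qPoch_ne_zero {Q a : ℂ} (hQ : ‖Q‖ ≤ 1) (ha : ‖a‖ < 1) (n : ℕ) :
    qPoch Q a n ≠ 0 :=
  Finset.prod_ne_zero_iff.mpr fun j _ => factor_ne_zero hQ ha j

noncomputable def uu (q : ℂ) (n : ℕ) : ℂ :=
  qPoch (q^3) (q^3) n * qPoch q (-q) n / (qPoch q q n * qPoch (q^3) (-q^3) n)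
noncomputable def ww (q : ℂ) (n : ℕ) : ℂ :=
  qPoch q (-q) n ^ 3 / qPoch (q^3) (-q^3) n
noncomputable def xx (q : ℂ) (n : ℕ) : ℂ :=
  qPoch q (-q) n ^ 2 * qPoch q q n / qPoch (q^3) (q^3) n
noncomputable def cc (q : ℂ) (K : ℕ) : ℂ :=
  q^(K+1) * qPoch q (-q) K ^ 2 * qPoch q q (K+1) / qPoch (q^3) (q^3) (K+1)

lemma key1 (q X Y A P R B PK RK AK : ℂ) (hR : R ≠ 0) (hB : B ≠ 0) (hAK : AK ≠ 0)
    (h1 : 1 - -q^3*X^3 ≠ 0) (h2 : 1 - q^3*(X^3*Y^3) ≠ 0) (h3 : 1 - q*X ≠ 0) :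
    q ^ 2 * X ^ 2 * Y * A * (P * (1 - -q * X)) * PK ^ 2 * (RK * (1 - q * (X * Y))) /
      (R * (B * (1 - -q ^ 3 * X ^ 3)) * (AK * (1 - q ^ 3 * (X ^ 3 * Y ^ 3)))) =
    q * (X * Y) * PK ^ 2 * (RK * (1 - q * (X * Y))) / (AK * (1 - q ^ 3 * (X ^ 3 * Y ^ 3))) *
        (A * (1 - q ^ 3 * X ^ 3) * (P * (1 - -q * X)) / (R * (1 - q * X) * (B * (1 - -q ^ 3 * X ^ 3))) -
          A * P / (R * B)) /
      2 := by
  have d1 : R * (1 - q * X) * (B * (1 - -q ^ 3 * X ^ 3)) ≠ 0 :=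
    mul_ne_zero (mul_ne_zero hR h3) (mul_ne_zero hB h1)
  have d2 : R * B ≠ 0 := mul_ne_zero hR hB
  have d3 : R * (B * (1 - -q ^ 3 * X ^ 3)) * (AK * (1 - q ^ 3 * (X ^ 3 * Y ^ 3))) ≠ 0 :=
    mul_ne_zero (mul_ne_zero hR (mul_ne_zero hB h1)) (mul_ne_zero hAK h2)
  have d4 : AK * (1 - q ^ 3 * (X ^ 3 * Y ^ 3)) * (R * (1 - q * X) * (B * (1 - -q ^ 3 * X ^ 3)) * (R * B)) * 2 ≠ 0 :=
    mul_ne_zero (mul_ne_zero (mul_ne_zero hAK h2) (mul_ne_zero d1 d2)) two_ne_zero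
  rw [div_sub_div _ _ d1 d2, div_mul_div_comm, div_div, div_eq_div_iff d3 d4]
  ring

lemma key2 (q X P R B A : ℂ) (hR : R ≠ 0) (hB : B ≠ 0) (hA : A ≠ 0)
    (h1 : 1 - -q^3*X^3 ≠ 0) (h2 : 1 - q^3*X^3 ≠ 0) (h3 : 1 - q*X ≠ 0) :
    q * X * P ^ 2 * (R * (1 - q * X)) / (A * (1 - q ^ 3 * X ^ 3)) *
      (A * (1 - q ^ 3 * X ^ 3) * (P * (1 - -q * X)) / (R * (1 - q * X) * (B * (1 - -q ^ 3 * X ^ 3)))) =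
    ((P * (1 - -q * X)) ^ 3 / (B * (1 - -q ^ 3 * X ^ 3)) - P ^ 3 / B) / 3 := by
  have d1 : A * (1 - q ^ 3 * X ^ 3) * (R * (1 - q * X) * (B * (1 - -q ^ 3 * X ^ 3))) ≠ 0 :=
    mul_ne_zero (mul_ne_zero hA h2) (mul_ne_zero (mul_ne_zero hR h3) (mul_ne_zero hB h1))
  have d2 : B * (1 - -q ^ 3 * X ^ 3) ≠ 0 := mul_ne_zero hB h1
  have d4 : B * (1 - -q ^ 3 * X ^ 3) * B * 3 ≠ 0 :=
    mul_ne_zero (mul_ne_zero d2 hB) three_ne_zero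
  rw [div_mul_div_comm, div_sub_div _ _ d2 hB, div_div, div_eq_div_iff d1 d4]
  ring

lemma key3 (q X P R B A : ℂ) (hA : A ≠ 0)
    (h2 : 1 - q^3*X^3 ≠ 0) :
    q * X * P ^ 2 * (R * (1 - q * X)) / (A * (1 - q ^ 3 * X ^ 3)) =
    (P * (1 - -q * X)) ^ 2 * (R * (1 - q * X)) / (A * (1 - q ^ 3 * X ^ 3)) - P ^ 2 * R / A := by
  have d1 : A * (1 - q ^ 3 * X ^ 3) ≠ 0 := mul_ne_zero hA h2
  rw [div_sub_div _ _ d1 hA, div_eq_div_iff d1 (mul_ne_zero d1 hA)]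
  ring

section
variable {q : ℂ} (hq : ‖q‖ < 1)
include hq

lemma hq1 : ‖q‖ ≤ 1 := hq.le
lemma hq3 : ‖q^3‖ ≤ 1 := by rw [norm_pow]; exact pow_le_one₀ (norm_nonneg q) hq.le
lemma hq3a : ‖q^3‖ < 1 := by
  rw [norm_pow]; exact pow_lt_one₀ (norm_nonneg q) hq (by norm_num)
lemma hq3b : ‖-q^3‖ < 1 := by rw [norm_neg]; exact hq3a hq

lemma I1 (a b : ℕ) :
    q ^ (2 * (a + 1) + b) * qPoch (q ^ 3) (q ^ 3) a * qPoch q (-q) (a + 1) *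
        (qPoch q (-q) (a + b)) ^ 2 * qPoch q q (a + 1 + b) /
      (qPoch q q a * qPoch (q ^ 3) (-q ^ 3) (a + 1) *
        qPoch (q ^ 3) (q ^ 3) (a + 1 + b))
    = cc q (a+b) * (uu q (a+1) - uu q a) / 2 := by
  have hRa : qPoch q q a ≠ 0 := qPoch_ne_zero (hq1 hq) hq a
  have hBa : qPoch (q^3) (-q^3) a ≠ 0 := qPoch_ne_zero (hq3 hq) (hq3b hq) a
  have hAK : qPoch (q^3) (q^3) (a+b) ≠ 0 := qPoch_ne_zero (hq3 hq) (hq3a hq) (a+b)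
  have h1 : (1 : ℂ) - -q^3 * (q^a)^3 ≠ 0 := by
    have := factor_ne_zero (hq3 hq) (hq3b hq) a
    rwa [show ((q^3)^a : ℂ) = (q^a)^3 by ring] at this
  have h2 : (1 : ℂ) - q^3 * ((q^a)^3 * (q^b)^3) ≠ 0 := by
    have := factor_ne_zero (hq3 hq) (hq3a hq) (a+b)
    rwa [show ((q^3)^(a+b) : ℂ) = (q^a)^3 * (q^b)^3 by ring] at this
  have h3 : (1 : ℂ) - q * q^a ≠ 0 := factor_ne_zero (hq1 hq) hq a
  rw [show a + 1 + b = (a + b) + 1 by omega]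
  simp only [uu, cc, qPoch_succ]
  rw [show q ^ (2 * (a + 1) + b) = q^2 * (q^a)^2 * q^b by ring,
    show ((q^3)^a : ℂ) = (q^a)^3 by ring,
    show ((q^3)^(a+b) : ℂ) = (q^a)^3 * (q^b)^3 by ring,
    show (q^(a+b) : ℂ) = q^a * q^b by rw [pow_add],
    show (q^(a+b+1) : ℂ) = q * (q^a * q^b) by rw [pow_succ, pow_add]; ring]
  exact key1 q (q^a) (q^b) _ _ _ _ _ _ _ hRa hBa hAK h1 h2 h3

lemma I2 (K : ℕ) : cc q K * uu q (K+1) = (ww q (K+1) - ww q K) / 3 := by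
  have hR : qPoch q q K ≠ 0 := qPoch_ne_zero (hq1 hq) hq K
  have hB : qPoch (q^3) (-q^3) K ≠ 0 := qPoch_ne_zero (hq3 hq) (hq3b hq) K
  have hA : qPoch (q^3) (q^3) K ≠ 0 := qPoch_ne_zero (hq3 hq) (hq3a hq) K
  have h1 : (1 : ℂ) - -q^3 * (q^K)^3 ≠ 0 := by
    have := factor_ne_zero (hq3 hq) (hq3b hq) K
    rwa [show ((q^3)^K : ℂ) = (q^K)^3 by ring] at this
  have h2 : (1 : ℂ) - q^3 * (q^K)^3 ≠ 0 := by
    have := factor_ne_zero (hq3 hq) (hq3a hq) K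
    rwa [show ((q^3)^K : ℂ) = (q^K)^3 by ring] at this
  have h3 : (1 : ℂ) - q * q^K ≠ 0 := factor_ne_zero (hq1 hq) hq K
  simp only [uu, cc, ww, qPoch_succ]
  rw [show ((q^3)^K : ℂ) = (q^K)^3 by ring,
    show (q^(K+1) : ℂ) = q * q^K by rw [pow_succ]; ring]
  exact key2 q (q^K) _ _ _ _ hR hB hA h1 h2 h3

lemma I3 (K : ℕ) : cc q K = xx q (K+1) - xx q K := by
  have hA : qPoch (q^3) (q^3) K ≠ 0 := qPoch_ne_zero (hq3 hq) (hq3a hq) K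
  have h2 : (1 : ℂ) - q^3 * (q^K)^3 ≠ 0 := by
    have := factor_ne_zero (hq3 hq) (hq3a hq) K
    rwa [show ((q^3)^K : ℂ) = (q^K)^3 by ring] at this
  simp only [xx, cc, qPoch_succ]
  rw [show ((q^3)^K : ℂ) = (q^K)^3 by ring,
    show (q^(K+1) : ℂ) = q * q^K by rw [pow_succ]; ring]
  exact key3 q (q^K) _ _ 0 _ hA h2

end


lemma geom_partial_le {r : ℝ} (h0 : 0 ≤ r) (h1 : r < 1) (n : ℕ) :
    ∑ j ∈ Finset.range n, r ^ j ≤ (1 - r)⁻¹ := by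
  have := Summable.sum_le_tsum (Finset.range n) (fun i _ => pow_nonneg h0 i)
    (summable_geometric_of_lt_one h0 h1)
  rwa [tsum_geometric_of_lt_one h0 h1] at this

lemma qPoch_norm_le {Q a : ℂ} (hQ : ‖Q‖ < 1) (ha : ‖a‖ ≤ 1) (n : ℕ) :
    ‖qPoch Q a n‖ ≤ Real.exp ((1 - ‖Q‖)⁻¹) := by
  rw [qPoch, norm_prod]
  calc ∏ j ∈ Finset.range n, ‖1 - a * Q ^ j‖
      ≤ ∏ j ∈ Finset.range n, Real.exp (‖Q‖ ^ j) := by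
        apply Finset.prod_le_prod (fun j _ => norm_nonneg _)
        intro j _
        calc ‖1 - a * Q ^ j‖ ≤ ‖(1 : ℂ)‖ + ‖a * Q ^ j‖ := norm_sub_le _ _
          _ ≤ 1 + ‖Q‖ ^ j := by
              rw [norm_one, norm_mul, norm_pow]
              have : ‖a‖ * ‖Q‖ ^ j ≤ 1 * ‖Q‖ ^ j :=
                mul_le_mul_of_nonneg_right ha (pow_nonneg (norm_nonneg Q) j)
              linarith
          _ ≤ Real.exp (‖Q‖ ^ j) := by
              have := Real.add_one_le_exp (‖Q‖ ^ j); linarith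
    _ = Real.exp (∑ j ∈ Finset.range n, ‖Q‖ ^ j) := (Real.exp_sum _ _).symm
    _ ≤ Real.exp ((1 - ‖Q‖)⁻¹) :=
        Real.exp_le_exp.2 (geom_partial_le (norm_nonneg Q) hQ n)

lemma exp_le_one_sub {x b : ℝ} (hx : 0 ≤ x) (hxb : x ≤ b) (hb : b < 1) :
    Real.exp (-(x / (1 - b))) ≤ 1 - x := by
  have hb0 : (0 : ℝ) < 1 - b := by linarith
  set s := x / (1 - b) with hs
  have hs0 : 0 ≤ s := div_nonneg hx hb0.le
  have hsx : s * (1 - b) = x := div_mul_cancel₀ x hb0.ne'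
  have h1 : 1 + s ≤ Real.exp s := by have := Real.add_one_le_exp s; linarith
  have hx1 : (0 : ℝ) < 1 - x := by linarith
  rw [Real.exp_neg, inv_le_comm₀ (Real.exp_pos s) hx1]
  calc (1 - x)⁻¹ ≤ 1 + s := by
        rw [inv_le_iff_one_le_mul₀ hx1]
        nlinarith
    _ ≤ Real.exp s := h1

lemma qPoch_norm_ge {Q a : ℂ} (hQ : ‖Q‖ < 1) (ha : ‖a‖ < 1) (n : ℕ) :
    Real.exp (-((1 - ‖Q‖)⁻¹ * (1 - ‖a‖)⁻¹)) ≤ ‖qPoch Q a n‖ := by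
  have hQ0 : (0:ℝ) ≤ ‖Q‖ := norm_nonneg Q
  have ha0 : (0:ℝ) ≤ ‖a‖ := norm_nonneg a
  have hb0 : (0:ℝ) < 1 - ‖a‖ := by linarith
  rw [qPoch, norm_prod]
  calc Real.exp (-((1 - ‖Q‖)⁻¹ * (1 - ‖a‖)⁻¹))
      ≤ Real.exp (-(∑ j ∈ Finset.range n, ‖a‖ * ‖Q‖ ^ j / (1 - ‖a‖))) := by
        apply Real.exp_le_exp.2
        rw [neg_le_neg_iff]
        rw [← Finset.sum_div, ← Finset.mul_sum]
        rw [div_le_iff₀ hb0]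
        calc ‖a‖ * ∑ j ∈ Finset.range n, ‖Q‖ ^ j ≤ 1 * (1 - ‖Q‖)⁻¹ := by
              apply mul_le_mul ha.le (geom_partial_le hQ0 hQ n)
                (Finset.sum_nonneg fun j _ => pow_nonneg hQ0 j) zero_le_one
          _ = (1 - ‖Q‖)⁻¹ := one_mul _
          _ ≤ (1 - ‖Q‖)⁻¹ * (1 - ‖a‖)⁻¹ * (1 - ‖a‖) := by
              rw [mul_assoc, inv_mul_cancel₀ hb0.ne', mul_one]
    _ = ∏ j ∈ Finset.range n, Real.exp (-(‖a‖ * ‖Q‖ ^ j / (1 - ‖a‖))) := by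
        rw [← Real.exp_sum, ← Finset.sum_neg_distrib]
    _ ≤ ∏ j ∈ Finset.range n, ‖1 - a * Q ^ j‖ := by
        apply Finset.prod_le_prod (fun j _ => (Real.exp_pos _).le)
        intro j _
        have hxb : ‖a‖ * ‖Q‖ ^ j ≤ ‖a‖ := by
          calc ‖a‖ * ‖Q‖ ^ j ≤ ‖a‖ * 1 :=
                mul_le_mul_of_nonneg_left (pow_le_one₀ hQ0 hQ.le) ha0
            _ = ‖a‖ := mul_one _
        calc Real.exp (-(‖a‖ * ‖Q‖ ^ j / (1 - ‖a‖)))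
            ≤ 1 - ‖a‖ * ‖Q‖ ^ j :=
              exp_le_one_sub (mul_nonneg ha0 (pow_nonneg hQ0 j)) hxb ha
          _ = 1 - ‖a * Q ^ j‖ := by rw [norm_mul, norm_pow]
          _ ≤ ‖1 - a * Q ^ j‖ := by
              have := norm_sub_norm_le (1 : ℂ) (a * Q ^ j)
              simpa using this

lemma multipliable_qPoch {Q a : ℂ} (hQ : ‖Q‖ < 1) (ha : ‖a‖ < 1) :
    Multipliable (fun j : ℕ => 1 - a * Q ^ j) := by
  have hQ0 : (0:ℝ) ≤ ‖Q‖ := norm_nonneg Q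
  have ha0 : (0:ℝ) ≤ ‖a‖ := norm_nonneg a
  have hb0 : (0:ℝ) < 1 - ‖a‖ := by linarith
  apply Complex.multipliable_of_summable_log
  apply Summable.of_norm_bounded
    (g := fun n => (‖a‖ * ((1 - ‖a‖)⁻¹ / 2 + 1)) * ‖Q‖ ^ n)
    (Summable.mul_left _ (summable_geometric_of_lt_one hQ0 hQ))
  intro n
  have hzn : ‖-(a * Q ^ n)‖ = ‖a‖ * ‖Q‖ ^ n := by rw [norm_neg, norm_mul, norm_pow]
  have hQn1 : ‖Q‖ ^ n ≤ 1 := pow_le_one₀ hQ0 hQ.le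
  have ht : ‖a‖ * ‖Q‖ ^ n ≤ ‖a‖ := by
    calc ‖a‖ * ‖Q‖ ^ n ≤ ‖a‖ * 1 := mul_le_mul_of_nonneg_left hQn1 ha0
      _ = ‖a‖ := mul_one _
  have hz1 : ‖-(a * Q ^ n)‖ < 1 := by rw [hzn]; linarith
  have hlog := Complex.norm_log_one_add_le hz1
  rw [sub_eq_add_neg]
  apply le_trans hlog
  rw [hzn]
  have hinv : (1 - ‖a‖ * ‖Q‖ ^ n)⁻¹ ≤ (1 - ‖a‖)⁻¹ := by
    apply inv_anti₀ hb0
    linarith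
  have ht0 : 0 ≤ ‖a‖ * ‖Q‖ ^ n := mul_nonneg ha0 (pow_nonneg hQ0 n)
  have h2 : (‖a‖ * ‖Q‖ ^ n) ^ 2 * (1 - ‖a‖ * ‖Q‖ ^ n)⁻¹ / 2
      ≤ (‖a‖ * ‖Q‖ ^ n) * ((1 - ‖a‖)⁻¹ / 2) := by
    have hsq : (‖a‖ * ‖Q‖ ^ n) ^ 2 ≤ (‖a‖ * ‖Q‖ ^ n) * 1 := by nlinarith
    have hip : (0:ℝ) ≤ (1 - ‖a‖ * ‖Q‖ ^ n)⁻¹ := inv_nonneg.2 (by linarith)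
    nlinarith
  have hfin : ‖a‖ * ((1 - ‖a‖)⁻¹ / 2 + 1) * ‖Q‖ ^ n
      = ‖a‖ * ‖Q‖ ^ n * ((1 - ‖a‖)⁻¹ / 2) + ‖a‖ * ‖Q‖ ^ n := by ring
  have goal2 : (‖a‖ * ‖Q‖ ^ n) ^ 2 * (1 - ‖a‖ * ‖Q‖ ^ n)⁻¹ / 2 + ‖a‖ * ‖Q‖ ^ n
      ≤ ‖a‖ * ((1 - ‖a‖)⁻¹ / 2 + 1) * ‖Q‖ ^ n := by rw [hfin]; linarith
  convert goal2 using 2 <;> ring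

lemma tendsto_qPoch {Q a : ℂ} (hQ : ‖Q‖ < 1) (ha : ‖a‖ < 1) :
    Tendsto (fun n => qPoch Q a n) atTop (𝓝 (qPochInf Q a)) :=
  (multipliable_qPoch hQ ha).hasProd.tendsto_prod_nat

lemma qPochInf_ne_zero {Q a : ℂ} (hQ : ‖Q‖ < 1) (ha : ‖a‖ < 1) :
    qPochInf Q a ≠ 0 := by
  have h := ge_of_tendsto' ((tendsto_qPoch hQ ha).norm) (fun n => qPoch_norm_ge hQ ha n)
  intro h0
  rw [h0, norm_zero] at h
  exact absurd h (not_le.2 (Real.exp_pos _))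

noncomputable def ff (q : ℂ) (p : ℕ × ℕ) : ℂ :=
  q ^ (2 * (p.1 + 1) + p.2) * qPoch (q ^ 3) (q ^ 3) p.1 * qPoch q (-q) (p.1 + 1) *
    (qPoch q (-q) (p.1 + p.2)) ^ 2 * qPoch q q (p.1 + 1 + p.2) /
  (qPoch q q p.1 * qPoch (q ^ 3) (-q ^ 3) (p.1 + 1) *
    qPoch (q ^ 3) (q ^ 3) (p.1 + 1 + p.2))

noncomputable def FF (q : ℂ) (y : ℕ × ℕ) : ℂ :=
  if y.2 ≤ y.1 then ff q (y.2, y.1 - y.2) else 0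

lemma ff_bound {q : ℂ} (hq' : ‖q‖ < 1) (a b : ℕ) :
    ‖ff q (a, b)‖ ≤ (Real.exp ((1 - ‖q‖)⁻¹)^5 /
      Real.exp (-((1 - ‖q‖)⁻¹ * (1 - ‖q‖)⁻¹))^3) * (‖q‖ ^ a * ‖q‖ ^ b) := by
  set r := ‖q‖ with hrdef
  have hr0 : (0:ℝ) ≤ r := norm_nonneg q
  set M := Real.exp ((1 - r)⁻¹) with hMdef
  set δ := Real.exp (-((1 - r)⁻¹ * (1 - r)⁻¹)) with hδdef
  have hδ0 : (0:ℝ) < δ := Real.exp_pos _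
  have hq3r : ‖q^3‖ ≤ r := by
    rw [norm_pow]; exact pow_le_of_le_one hr0 hq'.le (by norm_num)
  have hupper : ∀ (aa : ℂ) (n : ℕ), ‖aa‖ ≤ 1 → ‖qPoch q aa n‖ ≤ M :=
    fun aa n h => qPoch_norm_le hq' h n
  have hupper3 : ∀ (aa : ℂ) (n : ℕ), ‖aa‖ ≤ 1 → ‖qPoch (q^3) aa n‖ ≤ M := by
    intro aa n h
    refine le_trans (qPoch_norm_le (hq3a hq') h n) (Real.exp_le_exp.2 ?_)
    exact inv_anti₀ (by linarith) (by linarith)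
  have hlow : ∀ n, δ ≤ ‖qPoch q q n‖ := fun n => qPoch_norm_ge hq' hq' n
  have hlow3 : ∀ (aa : ℂ), ‖aa‖ < 1 → ‖aa‖ ≤ r → ∀ n, δ ≤ ‖qPoch (q^3) aa n‖ := by
    intro aa h1 h2 n
    refine le_trans (Real.exp_le_exp.2 ?_) (qPoch_norm_ge (hq3a hq') h1 n)
    rw [neg_le_neg_iff]
    have i1 : (1 - ‖q^3‖)⁻¹ ≤ (1-r)⁻¹ := inv_anti₀ (by linarith) (by linarith)
    have i2 : (1 - ‖aa‖)⁻¹ ≤ (1-r)⁻¹ := inv_anti₀ (by linarith) (by linarith)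
    have n2 : (0:ℝ) ≤ (1 - ‖aa‖)⁻¹ := inv_nonneg.2 (by linarith)
    have n3 : (0:ℝ) ≤ (1 - r)⁻¹ := inv_nonneg.2 (by linarith)
    exact mul_le_mul i1 i2 n2 n3
  have hnum : ‖q ^ (2 * (a + 1) + b) * qPoch (q ^ 3) (q ^ 3) a * qPoch q (-q) (a + 1) *
      (qPoch q (-q) (a + b)) ^ 2 * qPoch q q (a + 1 + b)‖
      ≤ r ^ (2 * (a + 1) + b) * M^5 := by
    rw [norm_mul, norm_mul, norm_mul, norm_mul, norm_pow, norm_pow]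
    have b1 : ‖qPoch (q^3) (q^3) a‖ ≤ M := hupper3 (q^3) a (hq3 hq')
    have b2 : ‖qPoch q (-q) (a+1)‖ ≤ M := hupper (-q) (a+1) (by rw [norm_neg]; exact hq'.le)
    have b3 : ‖qPoch q (-q) (a+b)‖ ≤ M := hupper (-q) (a+b) (by rw [norm_neg]; exact hq'.le)
    have b4 : ‖qPoch q q (a+1+b)‖ ≤ M := hupper q (a+1+b) hq'.le
    calc ‖q‖ ^ (2 * (a + 1) + b) * ‖qPoch (q ^ 3) (q ^ 3) a‖ * ‖qPoch q (-q) (a + 1)‖ *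
          ‖qPoch q (-q) (a + b)‖ ^ 2 * ‖qPoch q q (a + 1 + b)‖
        ≤ r ^ (2 * (a + 1) + b) * M * M * M^2 * M := by
          gcongr <;> first | exact b1 | exact b2 | exact b3 | exact b4
      _ = r ^ (2 * (a + 1) + b) * M^5 := by ring
  have hden : δ^3 ≤ ‖qPoch q q a * qPoch (q ^ 3) (-q ^ 3) (a + 1) *
      qPoch (q ^ 3) (q ^ 3) (a + 1 + b)‖ := by
    rw [norm_mul, norm_mul]
    have c1 := hlow a
    have c2 := hlow3 (-q^3) (hq3b hq') (by rw [norm_neg]; exact hq3r) (a+1)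
    have c3 := hlow3 (q^3) (hq3a hq') hq3r (a+1+b)
    calc δ^3 = δ * δ * δ := by ring
      _ ≤ _ := by
          apply mul_le_mul (mul_le_mul c1 c2 hδ0.le (norm_nonneg _)) c3 hδ0.le
          exact mul_nonneg (norm_nonneg _) (norm_nonneg _)
  calc ‖ff q (a, b)‖
      = ‖q ^ (2 * (a + 1) + b) * qPoch (q ^ 3) (q ^ 3) a * qPoch q (-q) (a + 1) *
          (qPoch q (-q) (a + b)) ^ 2 * qPoch q q (a + 1 + b)‖ /
        ‖qPoch q q a * qPoch (q ^ 3) (-q ^ 3) (a + 1) * qPoch (q ^ 3) (q ^ 3) (a + 1 + b)‖ :=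
        norm_div _ _
    _ ≤ (r ^ (2 * (a + 1) + b) * M^5) / δ^3 :=
        div_le_div₀ (by positivity) hnum (by positivity) hden
    _ ≤ (M^5 / δ^3) * (r ^ a * r ^ b) := by
        have he : r ^ (2*(a+1)+b) ≤ r^a * r^b := by
          calc r ^ (2*(a+1)+b) = (r^a * r^b) * r^(a+2) := by ring
            _ ≤ (r^a * r^b) * 1 :=
                mul_le_mul_of_nonneg_left (pow_le_one₀ hr0 hq'.le) (by positivity)
            _ = r^a * r^b := mul_one _
        calc (r ^ (2*(a+1)+b) * M^5) / δ^3 = (M^5/δ^3) * r ^ (2*(a+1)+b) := by ring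
          _ ≤ (M^5/δ^3) * (r^a*r^b) := mul_le_mul_of_nonneg_left he (by positivity)

lemma prod_neg_q_mul (q : ℂ) (hq : ‖q‖ < 1) :
    qPochInf q (-q) * qPochInf q q = qPochInf (q^2) (q^2) := by
  have m1 : Multipliable (fun j : ℕ => 1 - (-q) * q ^ j) :=
    multipliable_qPoch hq (by rwa [norm_neg])
  have m2 : Multipliable (fun j : ℕ => 1 - q * q ^ j) := multipliable_qPoch hq hq
  rw [qPochInf, qPochInf, qPochInf, ← Multipliable.tprod_mul m1 m2]
  apply tprod_congr
  intro j
  rw [show ((q^2)^j : ℂ) = (q^j)^2 by ring]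
  ring


/- The double sum is over `m ≥ 1, n ≥ 0`, encoded by `m = p.1 + 1`, `n = p.2`. -/
theorem thmDS2_c (q : ℂ) (hq : ‖q‖ < 1) :
    ∑' p : ℕ × ℕ,
      q ^ (2 * (p.1 + 1) + p.2) * qPoch (q ^ 3) (q ^ 3) p.1 * qPoch q (-q) (p.1 + 1) *
        (qPoch q (-q) (p.1 + p.2)) ^ 2 * qPoch q q (p.1 + 1 + p.2) /
      (qPoch q q p.1 * qPoch (q ^ 3) (-q ^ 3) (p.1 + 1) *
        qPoch (q ^ 3) (q ^ 3) (p.1 + 1 + p.2))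
    = (1 / 6) * (qPochInf q (-q)) ^ 3 / qPochInf (q ^ 3) (-q ^ 3)
      - (1 / 2) * (qPochInf q (-q) * qPochInf (q ^ 2) (q ^ 2)) / qPochInf (q ^ 3) (q ^ 3)
      + 1 / 3 := by
  have hq' : ‖q‖ < 1 := hq
  have hqa' : ‖-q‖ < 1 := by rwa [norm_neg]
  show (∑' p : ℕ × ℕ, ff q p) = _
  have hr0 : (0:ℝ) ≤ ‖q‖ := norm_nonneg q
  have hSum : Summable (ff q) := by
    apply Summable.of_norm_bounded (g := fun p : ℕ×ℕ =>
      (Real.exp ((1 - ‖q‖)⁻¹)^5 / Real.exp (-((1 - ‖q‖)⁻¹ * (1 - ‖q‖)⁻¹))^3)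
        * (‖q‖ ^ p.1 * ‖q‖ ^ p.2))
    · exact Summable.mul_left _ ((summable_geometric_of_lt_one hr0 hq').mul_of_nonneg
        (summable_geometric_of_lt_one hr0 hq')
        (fun n => pow_nonneg hr0 n) (fun n => pow_nonneg hr0 n))
    · rintro ⟨a, b⟩
      exact ff_bound hq' a b
  have hinj : Function.Injective (fun p : ℕ × ℕ => ((p.1 + p.2, p.1) : ℕ × ℕ)) := by
    rintro ⟨a,b⟩ ⟨c,d⟩ h
    simp only [Prod.mk.injEq] at h
    simp only [Prod.mk.injEq]
    omega
  have hcomp : (FF q ∘ fun p : ℕ × ℕ => ((p.1 + p.2, p.1) : ℕ × ℕ)) = ff q := by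
    funext p
    simp only [FF, Function.comp_apply]
    rw [if_pos (Nat.le_add_right _ _)]
    simp [Nat.add_sub_cancel_left]
  have hrange : ∀ y ∉ Set.range (fun p : ℕ × ℕ => ((p.1 + p.2, p.1) : ℕ × ℕ)), FF q y = 0 := by
    intro y hy
    rw [FF]
    obtain ⟨y1, y2⟩ := y
    by_cases hc : y2 ≤ y1
    · exfalso
      apply hy
      refine ⟨(y2, y1 - y2), ?_⟩
      simp only [Prod.mk.injEq]
      exact ⟨by omega, trivial⟩
    · exact if_neg hc
  have hFS : HasSum (FF q) (∑' p : ℕ × ℕ, ff q p) := by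
    apply (hinj.hasSum_iff hrange).mp
    rw [hcomp]
    exact hSum.hasSum
  have hfib : ∀ K : ℕ, HasSum (fun a => FF q (K, a))
      ((ww q (K+1)/6 - xx q (K+1)/2) - (ww q K/6 - xx q K/2)) := by
    intro K
    have hvan : ∀ a ∉ Finset.range (K+1), FF q (K, a) = 0 := by
      intro a ha
      simp only [Finset.mem_range] at ha
      rw [FF]
      exact if_neg (by omega)
    have h0 : HasSum (fun a => FF q (K, a)) (∑ a ∈ Finset.range (K+1), FF q (K, a)) :=
      hasSum_sum_of_ne_finset_zero hvan
    have hval : ∑ a ∈ Finset.range (K+1), FF q (K, a)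
        = (ww q (K+1)/6 - xx q (K+1)/2) - (ww q K/6 - xx q K/2) := by
      have hstep : ∀ a ∈ Finset.range (K+1), FF q (K, a)
          = cc q K * uu q (a+1) / 2 - cc q K * uu q a / 2 := by
        intro a ha
        simp only [Finset.mem_range] at ha
        have hle : a ≤ K := by omega
        rw [FF]
        rw [if_pos hle]
        have hI := I1 hq' a (K - a)
        calc ff q (a, K - a) = cc q (a + (K - a)) * (uu q (a+1) - uu q a) / 2 := hI
          _ = cc q K * uu q (a+1)/2 - cc q K * uu q a / 2 := by
              rw [show a + (K - a) = K by omega]; ring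
      rw [Finset.sum_congr rfl hstep]
      have tele := Finset.sum_range_sub (fun j => cc q K * uu q j / 2) (K+1)
      rw [tele]
      have hu0 : uu q 0 = 1 := by simp [uu, qPoch_zero]
      rw [hu0]
      linear_combination (I2 hq' K)/2 - (I3 hq' K)/2
    rw [← hval]
    exact h0
  have hg : HasSum (fun K => (ww q (K+1)/6 - xx q (K+1)/2) - (ww q K/6 - xx q K/2))
      (∑' p : ℕ × ℕ, ff q p) := hFS.prod_fiberwise hfib
  have htends := hg.tendsto_sum_nat
  have hpart : ∀ N : ℕ, ∑ K ∈ Finset.range N,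
      ((ww q (K+1)/6 - xx q (K+1)/2) - (ww q K/6 - xx q K/2))
      = (ww q N/6 - xx q N/2) - (ww q 0/6 - xx q 0/2) := by
    intro N
    have tele := Finset.sum_range_sub (fun j => ww q j/6 - xx q j/2) N
    simpa using tele
  have htends2 : Tendsto (fun N => (ww q N/6 - xx q N/2) - (ww q 0/6 - xx q 0/2)) atTop
      (𝓝 (∑' p : ℕ × ℕ, ff q p)) := by
    apply Filter.Tendsto.congr hpart htends
  have hP : Tendsto (fun N => qPoch q (-q) N) atTop (𝓝 (qPochInf q (-q))) :=
    tendsto_qPoch hq' hqa'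
  have hR : Tendsto (fun N => qPoch q q N) atTop (𝓝 (qPochInf q q)) :=
    tendsto_qPoch hq' hq'
  have hB : Tendsto (fun N => qPoch (q^3) (-q^3) N) atTop (𝓝 (qPochInf (q^3) (-q^3))) :=
    tendsto_qPoch (hq3a hq') (hq3b hq')
  have hA : Tendsto (fun N => qPoch (q^3) (q^3) N) atTop (𝓝 (qPochInf (q^3) (q^3))) :=
    tendsto_qPoch (hq3a hq') (hq3a hq')
  have hBne : qPochInf (q^3) (-q^3) ≠ 0 := qPochInf_ne_zero (hq3a hq') (hq3b hq')
  have hAne : qPochInf (q^3) (q^3) ≠ 0 := qPochInf_ne_zero (hq3a hq') (hq3a hq')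
  have hww : Tendsto (fun N => ww q N) atTop
      (𝓝 (qPochInf q (-q) ^ 3 / qPochInf (q^3) (-q^3))) := by
    simp only [ww]
    exact (hP.pow 3).div hB hBne
  have hxx : Tendsto (fun N => xx q N) atTop
      (𝓝 (qPochInf q (-q) ^ 2 * qPochInf q q / qPochInf (q^3) (q^3))) := by
    simp only [xx]
    exact ((hP.pow 2).mul hR).div hA hAne
  have hlim : Tendsto (fun N => (ww q N/6 - xx q N/2) - (ww q 0/6 - xx q 0/2)) atTop
      (𝓝 ((qPochInf q (-q) ^ 3 / qPochInf (q^3) (-q^3) / 6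
        - qPochInf q (-q) ^ 2 * qPochInf q q / qPochInf (q^3) (q^3) / 2)
        - (ww q 0/6 - xx q 0/2))) :=
    ((hww.div_const 6).sub (hxx.div_const 2)).sub tendsto_const_nhds
  have hSval := tendsto_nhds_unique htends2 hlim
  rw [hSval]
  have hw0 : ww q 0 = 1 := by simp [ww, qPoch_zero]
  have hx0 : xx q 0 = 1 := by simp [xx, qPoch_zero]
  rw [hw0, hx0, ← prod_neg_q_mul q hq']
  ring
end
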